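/- arXiv:1812.08640 — 4 statements merged into one kernel-verified Lean document; each statement's English description precedes it below -/
import Mathlib

section
/- Let P ⊆ ℝ^d be a full-dimensional polytope. Then P has a vertex-facet assignment if and only if for every face σ of P, the number of vertices of σ plus the number of facets of P containing σ is at most max{f_0(P), f_{d−1}(P)}, where f_0(P) is the number of vertices of P and f_{d−1}(P) is the number of facets of P. -/
/-- A polytope is the convex hull of a finite set of points. -/
def IsPolytope {V : Type*} [AddCommGroup V] [Module ℝ V] (P : Set V) : Prop :=
  ∃ S : Set V, S.Finite ∧ P = convexHull ℝ S

/-- A face of `Q` is a nonempty proper exposed face of `Q`. -/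
def IsFaceOf {V : Type*} [NormedAddCommGroup V] [NormedSpace ℝ V] (Q F : Set V) : Prop :=
  IsExposed ℝ Q F ∧ F.Nonempty ∧ F ≠ Q

/-- The dimension of a set: the dimension of its affine span. -/
noncomputable def polyDim {V : Type*} [NormedAddCommGroup V] [NormedSpace ℝ V]
    (Q : Set V) : ℕ :=
  Module.finrank ℝ (affineSpan ℝ Q).direction

/-- The facets of a full-dimensional polytope `P ⊆ V`: faces whose affine span has
dimension `dim V - 1`. -/
def ambientFacets {V : Type*} [NormedAddCommGroup V] [NormedSpace ℝ V]
    (P : Set V) : Set (Set V) :=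
  {F | IsFaceOf P F ∧ polyDim F = Module.finrank ℝ V - 1}

/-- A vertex-facet assignment: an injective map from vertices (extreme points) to
non-incident facets, or an injective map from facets to non-incident vertices. -/
def HasVFA {V : Type*} [NormedAddCommGroup V] [NormedSpace ℝ V] (P : Set V) : Prop :=
  (∃ f : (P.extremePoints ℝ) → (ambientFacets P), Function.Injective f ∧
      ∀ v, (v : V) ∉ (f v : Set V)) ∨
  (∃ g : (ambientFacets P) → (P.extremePoints ℝ), Function.Injective g ∧
      ∀ F : (ambientFacets P), (g F : V) ∉ (F : Set V))

open Set

section Aux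

set_option linter.unusedSectionVars false

variable {V : Type*} [NormedAddCommGroup V] [NormedSpace ℝ V] [FiniteDimensional ℝ V]
  {P σ : Set V}

theorem IsPolytope.isCompact' (hP : IsPolytope P) : IsCompact P := by
  obtain ⟨S, hS, rfl⟩ := hP; exact hS.isCompact_convexHull (𝕜 := ℝ)

theorem IsPolytope.convex' (hP : IsPolytope P) : Convex ℝ P := by
  obtain ⟨S, hS, rfl⟩ := hP; exact convex_convexHull ℝ S

theorem IsPolytope.finite_extremePoints (hP : IsPolytope P) :
    (P.extremePoints ℝ).Finite := by
  obtain ⟨S, hS, rfl⟩ := hP; exact hS.subset extremePoints_convexHull_subset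

theorem IsFaceOf.extremePoints_subset' (hσ : IsFaceOf P σ) :
    σ.extremePoints ℝ ⊆ P.extremePoints ℝ :=
  hσ.1.isExtreme.extremePoints_subset_extremePoints

theorem IsFaceOf.eq_hull (hP : IsPolytope P) (hσ : IsFaceOf P σ) :
    σ = convexHull ℝ (σ.extremePoints ℝ) := by
  have hcl : IsClosed σ := hσ.1.isClosed hP.isCompact'.isClosed
  have hcomp : IsCompact σ := hP.isCompact'.of_isClosed_subset hcl hσ.1.subset
  have hconv : Convex ℝ σ := hσ.1.convex hP.convex'
  have hfin : (σ.extremePoints ℝ).Finite :=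
    hP.finite_extremePoints.subset hσ.extremePoints_subset'
  have := closure_convexHull_extremePoints hcomp hconv
  rwa [(hfin.isCompact_convexHull (𝕜 := ℝ)).isClosed.closure_eq, eq_comm] at this

theorem finite_faces (hP : IsPolytope P) : {F : Set V | IsFaceOf P F}.Finite := by
  apply Set.Finite.of_finite_image (f := fun F => F.extremePoints ℝ)
  · apply hP.finite_extremePoints.finite_subsets.subset
    rintro _ ⟨F, hF, rfl⟩
    exact hF.extremePoints_subset'
  · intro F hF G hG h
    rw [IsFaceOf.eq_hull hP hF, IsFaceOf.eq_hull hP hG]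
    simp only at h
    rw [h]

theorem finite_ambientFacets (hP : IsPolytope P) : (ambientFacets P).Finite :=
  (finite_faces hP).subset fun _ hF => hF.1

theorem isFaceOf_sInter {𝒜 : Finset (Set V)} (hne : 𝒜.Nonempty)
    (hmem : ∀ F ∈ 𝒜, IsFaceOf P F) (hσ : (⋂₀ (𝒜 : Set (Set V))).Nonempty) :
    IsFaceOf P (⋂₀ (𝒜 : Set (Set V))) := by
  refine ⟨IsExposed.sInter hne (fun F hF => (hmem F hF).1), hσ, ?_⟩
  obtain ⟨F₀, hF₀⟩ := hne
  intro h
  have h1 : P ⊆ F₀ := h ▸ sInter_subset_of_mem (by exact_mod_cast hF₀)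
  exact (hmem F₀ hF₀).2.2 ((hmem F₀ hF₀).1.subset.antisymm h1)

end Aux


/-- A full-dimensional polytope `P ⊆ ℝ^d` has a vertex-facet assignment
iff for every face `σ` of `P`, `f₀(σ)` plus the number of facets of `P` containing `σ`
is at most `max {f₀(P), f_{d-1}(P)}`. -/

theorem vfa_iff_face_estimate {d : ℕ} (P : Set (Fin d → ℝ))
    (hP : IsPolytope P) (hfull : affineSpan ℝ P = ⊤) :
    HasVFA P ↔ ∀ σ : Set (Fin d → ℝ), IsFaceOf P σ →
      (σ.extremePoints ℝ).ncard + {F ∈ ambientFacets P | σ ⊆ F}.ncard ≤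
        max (P.extremePoints ℝ).ncard (ambientFacets P).ncard := by
  classical
  have hVfin : (P.extremePoints ℝ).Finite := hP.finite_extremePoints
  have hFfin : (ambientFacets P).Finite := finite_ambientFacets hP
  haveI : Fintype ↥(P.extremePoints ℝ) := hVfin.fintype
  haveI : Fintype ↥(ambientFacets P) := hFfin.fintype
  have hVcard : Fintype.card ↥(P.extremePoints ℝ) = (P.extremePoints ℝ).ncard := by
    rw [← Nat.card_coe_set_eq, Nat.card_eq_fintype_card]
  have hFcard : Fintype.card ↥(ambientFacets P) = (ambientFacets P).ncard := by
    rw [← Nat.card_coe_set_eq, Nat.card_eq_fintype_card]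
  constructor
  · rintro (⟨f, finj, hf⟩ | ⟨g, ginj, hg⟩) σ hσ
    · -- vertex → facet assignment
      have h1 : (σ.extremePoints ℝ).ncard ≤
          ((ambientFacets P) \ {F ∈ ambientFacets P | σ ⊆ F}).ncard := by
        refine Set.ncard_le_ncard_of_injOn
          (fun v => if h : v ∈ P.extremePoints ℝ then (f ⟨v, h⟩ : Set (Fin d → ℝ)) else ∅)
          ?_ ?_ ?_
        · intro v hv
          have hvP : v ∈ P.extremePoints ℝ := hσ.extremePoints_subset' hv
          simp only [dif_pos hvP]
          refine ⟨(f ⟨v, hvP⟩).2, fun hmem => hf ⟨v, hvP⟩ (hmem.2 (extremePoints_subset hv))⟩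
        · intro a ha b hb hab
          have haP : a ∈ P.extremePoints ℝ := hσ.extremePoints_subset' ha
          have hbP : b ∈ P.extremePoints ℝ := hσ.extremePoints_subset' hb
          simp only [dif_pos haP, dif_pos hbP] at hab
          have := finj (Subtype.ext hab)
          exact congrArg Subtype.val this
        · exact hFfin.diff
      rw [Set.ncard_diff (sep_subset _ _) (hFfin.subset (sep_subset _ _))] at h1
      have h2 : {F ∈ ambientFacets P | σ ⊆ F}.ncard ≤ (ambientFacets P).ncard :=
        Set.ncard_le_ncard (sep_subset _ _) hFfin
      have : (σ.extremePoints ℝ).ncard + {F ∈ ambientFacets P | σ ⊆ F}.ncard ≤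
          (ambientFacets P).ncard := by omega
      exact this.trans (le_max_right _ _)
    · -- facet → vertex assignment
      have h1 : {F ∈ ambientFacets P | σ ⊆ F}.ncard ≤
          ((P.extremePoints ℝ) \ σ.extremePoints ℝ).ncard := by
        refine Set.ncard_le_ncard_of_injOn
          (fun F => if h : F ∈ ambientFacets P then (g ⟨F, h⟩ : Fin d → ℝ) else 0)
          ?_ ?_ ?_
        · rintro F ⟨hF, hσF⟩
          simp only [dif_pos hF]
          refine ⟨(g ⟨F, hF⟩).2, fun hmem => hg ⟨F, hF⟩ (hσF (extremePoints_subset hmem))⟩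
        · rintro a ⟨ha, -⟩ b ⟨hb, -⟩ hab
          simp only [dif_pos ha, dif_pos hb] at hab
          have := ginj (Subtype.ext hab)
          exact congrArg Subtype.val this
        · exact hVfin.diff
      rw [Set.ncard_diff (hσ.extremePoints_subset') (hVfin.subset hσ.extremePoints_subset')] at h1
      have h2 : (σ.extremePoints ℝ).ncard ≤ (P.extremePoints ℝ).ncard :=
        Set.ncard_le_ncard hσ.extremePoints_subset' hVfin
      have : (σ.extremePoints ℝ).ncard + {F ∈ ambientFacets P | σ ⊆ F}.ncard ≤
          (P.extremePoints ℝ).ncard := by omega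
      exact this.trans (le_max_left _ _)
  · intro hEst
    by_cases hc : (P.extremePoints ℝ).ncard ≤ (ambientFacets P).ncard
    · left
      set t : ↥(P.extremePoints ℝ) → Finset ↥(ambientFacets P) :=
        fun v => Finset.univ.filter (fun F => (v : Fin d → ℝ) ∉ (F : Set (Fin d → ℝ))) with ht
      have hall : ∀ s : Finset ↥(P.extremePoints ℝ), s.card ≤ (s.biUnion t).card := ?_
      case _ =>
        obtain ⟨f, finj, hfv⟩ := (Finset.all_card_le_biUnion_card_iff_exists_injective t).mp hall
        refine ⟨f, finj, fun v => ?_⟩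
        have := hfv v
        rw [ht, Finset.mem_filter] at this
        exact this.2
      intro s
      set A : Finset ↥(ambientFacets P) :=
        Finset.univ.filter (fun F => ∀ v ∈ s, (v : Fin d → ℝ) ∈ (F : Set (Fin d → ℝ))) with hA
      have hbi : s.biUnion t = Aᶜ := by
        ext F
        simp only [Finset.mem_biUnion, ht, Finset.mem_filter, Finset.mem_univ, true_and,
          Finset.mem_compl, hA, not_forall]
        constructor
        · rintro ⟨v, hv, hnot⟩; exact ⟨v, hv, hnot⟩
        · rintro ⟨v, hv, hnot⟩; exact ⟨v, hv, hnot⟩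
      rw [hbi, Finset.card_compl]
      have hAcard : A.card ≤ Fintype.card ↥(ambientFacets P) := A.card_le_univ
      rcases s.eq_empty_or_nonempty with rfl | hs
      · simp
      rcases A.eq_empty_or_nonempty with hAe | hAne
      · rw [hAe]
        simp only [Finset.card_empty, Nat.sub_zero]
        calc s.card ≤ Fintype.card ↥(P.extremePoints ℝ) := s.card_le_univ
          _ = (P.extremePoints ℝ).ncard := hVcard
          _ ≤ (ambientFacets P).ncard := hc
          _ = Fintype.card ↥(ambientFacets P) := hFcard.symm
      · set 𝒜 : Finset (Set (Fin d → ℝ)) := A.image Subtype.val with h𝒜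
        have h𝒜ne : 𝒜.Nonempty := by rw [h𝒜]; exact hAne.image _
        have hmem𝒜 : ∀ F ∈ 𝒜, IsFaceOf P F := by
          intro F hF
          rw [h𝒜, Finset.mem_image] at hF
          obtain ⟨F', _, rfl⟩ := hF
          exact F'.2.1
        obtain ⟨v₀, hv₀⟩ := hs
        set σ := ⋂₀ (𝒜 : Set (Set (Fin d → ℝ))) with hσdef
        have hvσ : ∀ v ∈ s, (v : Fin d → ℝ) ∈ σ := by
          intro v hv
          rw [hσdef, mem_sInter]
          intro F hF
          rw [Finset.mem_coe, h𝒜, Finset.mem_image] at hF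
          obtain ⟨F', hF', rfl⟩ := hF
          rw [hA, Finset.mem_filter] at hF'
          exact hF'.2 v hv
        have hσne : σ.Nonempty := ⟨v₀, hvσ v₀ hv₀⟩
        have hface : IsFaceOf P σ := isFaceOf_sInter h𝒜ne hmem𝒜 hσne
        have hσsub : ∀ F ∈ 𝒜, σ ⊆ F := fun F hF => sInter_subset_of_mem (Finset.mem_coe.mpr hF)
        have key := hEst σ hface
        rw [max_eq_right hc] at key
        -- s.card ≤ (σ.extremePoints ℝ).ncard
        have h1 : s.card ≤ (σ.extremePoints ℝ).ncard := by
          have hinj : (s.image (fun v : ↥(P.extremePoints ℝ) => (v : Fin d → ℝ))).card = s.card :=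
            Finset.card_image_of_injective _ Subtype.val_injective
          rw [← hinj, ← Set.ncard_coe_finset]
          apply Set.ncard_le_ncard _ (hVfin.subset hface.extremePoints_subset')
          intro v hv
          rw [Finset.coe_image, Set.mem_image] at hv
          obtain ⟨v', hv', rfl⟩ := hv
          rw [Finset.mem_coe] at hv'
          exact inter_extremePoints_subset_extremePoints_of_subset
            (hface.1.subset) ⟨hvσ v' hv', v'.2⟩
        -- A.card ≤ ncard of facets containing σ
        have h2 : A.card ≤ {F ∈ ambientFacets P | σ ⊆ F}.ncard := by
          have hinj : 𝒜.card = A.card := by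
            rw [h𝒜]; exact Finset.card_image_of_injective _ Subtype.val_injective
          rw [← hinj, ← Set.ncard_coe_finset]
          apply Set.ncard_le_ncard _ (hFfin.subset (sep_subset _ _))
          intro F hF
          rw [Finset.mem_coe] at hF
          have hFface : F ∈ ambientFacets P := by
            rw [h𝒜, Finset.mem_image] at hF
            obtain ⟨F', _, rfl⟩ := hF
            exact F'.2
          exact ⟨hFface, hσsub F hF⟩
        rw [← hFcard] at key
        omega
    · right
      push_neg at hc
      set t : ↥(ambientFacets P) → Finset ↥(P.extremePoints ℝ) :=
        fun F => Finset.univ.filter (fun v => (v : Fin d → ℝ) ∉ (F : Set (Fin d → ℝ))) with ht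
      have hall : ∀ s : Finset ↥(ambientFacets P), s.card ≤ (s.biUnion t).card := ?_
      case _ =>
        obtain ⟨g, ginj, hgv⟩ := (Finset.all_card_le_biUnion_card_iff_exists_injective t).mp hall
        refine ⟨g, ginj, fun F => ?_⟩
        have := hgv F
        rw [ht, Finset.mem_filter] at this
        exact this.2
      intro s
      set B : Finset ↥(P.extremePoints ℝ) :=
        Finset.univ.filter (fun v => ∀ F ∈ s, (v : Fin d → ℝ) ∈ (F : Set (Fin d → ℝ))) with hB
      have hbi : s.biUnion t = Bᶜ := by
        ext v
        simp only [Finset.mem_biUnion, ht, Finset.mem_filter, Finset.mem_univ, true_and,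
          Finset.mem_compl, hB, not_forall]
        constructor
        · rintro ⟨F, hF, hnot⟩; exact ⟨F, hF, hnot⟩
        · rintro ⟨F, hF, hnot⟩; exact ⟨F, hF, hnot⟩
      rw [hbi, Finset.card_compl]
      have hBcard : B.card ≤ Fintype.card ↥(P.extremePoints ℝ) := B.card_le_univ
      rcases s.eq_empty_or_nonempty with rfl | hs
      · simp
      rcases B.eq_empty_or_nonempty with hBe | hBne
      · rw [hBe]
        simp only [Finset.card_empty, Nat.sub_zero]
        calc s.card ≤ Fintype.card ↥(ambientFacets P) := s.card_le_univ
          _ = (ambientFacets P).ncard := hFcard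
          _ ≤ (P.extremePoints ℝ).ncard := hc.le
          _ = Fintype.card ↥(P.extremePoints ℝ) := hVcard.symm
      · set 𝒜 : Finset (Set (Fin d → ℝ)) := s.image Subtype.val with h𝒜
        have h𝒜ne : 𝒜.Nonempty := by rw [h𝒜]; exact hs.image _
        have hmem𝒜 : ∀ F ∈ 𝒜, IsFaceOf P F := by
          intro F hF
          rw [h𝒜, Finset.mem_image] at hF
          obtain ⟨F', _, rfl⟩ := hF
          exact F'.2.1
        obtain ⟨v₀, hv₀⟩ := hBne
        set σ := ⋂₀ (𝒜 : Set (Set (Fin d → ℝ))) with hσdef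
        have hv₀σ : (v₀ : Fin d → ℝ) ∈ σ := by
          rw [hσdef, mem_sInter]
          intro F hF
          rw [Finset.mem_coe, h𝒜, Finset.mem_image] at hF
          obtain ⟨F', hF', rfl⟩ := hF
          rw [hB, Finset.mem_filter] at hv₀
          exact hv₀.2 F' hF'
        have hσne : σ.Nonempty := ⟨v₀, hv₀σ⟩
        have hface : IsFaceOf P σ := isFaceOf_sInter h𝒜ne hmem𝒜 hσne
        have hσsub : ∀ F ∈ 𝒜, σ ⊆ F := fun F hF => sInter_subset_of_mem (Finset.mem_coe.mpr hF)
        have key := hEst σ hface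
        rw [max_eq_left hc.le] at key
        have h1 : B.card ≤ (σ.extremePoints ℝ).ncard := by
          have hinj : (B.image (fun v : ↥(P.extremePoints ℝ) => (v : Fin d → ℝ))).card = B.card :=
            Finset.card_image_of_injective _ Subtype.val_injective
          rw [← hinj, ← Set.ncard_coe_finset]
          apply Set.ncard_le_ncard _ (hVfin.subset hface.extremePoints_subset')
          intro v hv
          rw [Finset.coe_image, Set.mem_image] at hv
          obtain ⟨v', hv', rfl⟩ := hv
          rw [Finset.mem_coe, hB, Finset.mem_filter] at hv'
          have hv'σ : (v' : Fin d → ℝ) ∈ σ := by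
            rw [hσdef, mem_sInter]
            intro F hF
            rw [Finset.mem_coe, h𝒜, Finset.mem_image] at hF
            obtain ⟨F', hF', rfl⟩ := hF
            exact hv'.2 F' hF'
          exact inter_extremePoints_subset_extremePoints_of_subset
            (hface.1.subset) ⟨hv'σ, v'.2⟩
        have h2 : s.card ≤ {F ∈ ambientFacets P | σ ⊆ F}.ncard := by
          have hinj : 𝒜.card = s.card := by
            rw [h𝒜]; exact Finset.card_image_of_injective _ Subtype.val_injective
          rw [← hinj, ← Set.ncard_coe_finset]
          apply Set.ncard_le_ncard _ (hFfin.subset (sep_subset _ _))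
          intro F hF
          rw [Finset.mem_coe] at hF
          have hFface : F ∈ ambientFacets P := by
            rw [h𝒜, Finset.mem_image] at hF
            obtain ⟨F', _, rfl⟩ := hF
            exact F'.2
          exact ⟨hFface, hσsub F hF⟩
        rw [← hVcard] at key
        omega
end

section
/- Let P ⊆ ℝ^d be a full-dimensional polytope. Suppose that for every face σ of P at least one of the following holds: (i) σ, regarded as a polytope, has at least as many facets as vertices; or (ii) the number of faces of P of dimension dim σ + 1 containing σ is at least the number of facets of P containing σ. Then P has a vertex-facet assignment. -/
open Set
open scoped Classical
set_option linter.unusedSectionVars false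
set_option linter.unusedVariables false
set_option maxHeartbeats 1000000


variable {E : Type*} [NormedAddCommGroup E] [NormedSpace ℝ E] [FiniteDimensional ℝ E]

theorem hull_le {s : Set E} {l : E →L[ℝ] ℝ} {c : ℝ} (h : ∀ y ∈ s, l y ≤ c) {x : E}
    (hx : x ∈ convexHull ℝ s) : l x ≤ c :=
  convexHull_min h (convex_halfSpace_le l.toLinearMap.isLinear c) hx

theorem const_on_affineSpan {s : Set E} {l : E →L[ℝ] ℝ} {c : ℝ} (h : ∀ y ∈ s, l y = c)
    {x : E} (hx : x ∈ affineSpan ℝ s) : l x = c := by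
  refine affineSpan_induction (p := fun y => l y = c) hx h ?_
  intro a u v w hu hv hw
  simp only [vsub_eq_sub, vadd_eq_add, map_add, map_smul, map_sub, hu, hv, hw, smul_eq_mul]
  ring

theorem exists_functional_vanishing {U : Submodule ℝ E} (hU : U ≠ ⊤) :
    ∃ g : E →L[ℝ] ℝ, g ≠ 0 ∧ ∀ u ∈ U, g u = 0 := by
  obtain ⟨x, hx⟩ : ∃ x, x ∉ U := by
    by_contra h; push_neg at h; exact hU (Submodule.eq_top_iff'.2 h)
  have hclosed : IsClosed (U : Set E) := Submodule.closed_of_finiteDimensional U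
  obtain ⟨f, u, hfu, hux⟩ := geometric_hahn_banach_closed_point U.convex hclosed hx
  have h0 : (0:ℝ) < u := by simpa using hfu 0 U.zero_mem
  refine ⟨f, ?_, ?_⟩
  · rintro rfl; simp at hux; linarith
  · intro a ha
    by_contra hfa
    have := hfu ((2 * u / f a) • a) (U.smul_mem _ ha)
    rw [map_smul] at this
    simp only [smul_eq_mul] at this
    rw [div_mul_cancel₀] at this
    · linarith
    · exact hfa

namespace IsFaceOf

theorem subset {Q F : Set E} (h : IsFaceOf Q F) : F ⊆ Q := h.1.subset

theorem exists_functional {Q F : Set E} (h : IsFaceOf Q F) :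
    ∃ (l : E →L[ℝ] ℝ) (β : ℝ), (∀ x ∈ F, l x = β) ∧ (∀ y ∈ Q, l y ≤ β) ∧
      (∀ y ∈ Q, l y = β → y ∈ F) := by
  obtain ⟨hexp, hne, hneq⟩ := h
  obtain ⟨l, hl⟩ := hexp hne
  obtain ⟨x₀, hx₀⟩ := hne
  rw [hl] at hx₀
  refine ⟨l, l x₀, ?_, fun y hy => hx₀.2 y hy, fun y hy hly => ?_⟩
  · intro x hx; rw [hl] at hx; exact le_antisymm (hx₀.2 x hx.1) (hx.2 x₀ hx₀.1)
  · rw [hl]; exact ⟨hy, fun z hz => hly ▸ hx₀.2 z hz⟩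

/-- points of Q in the affine span of a face F are in F -/
theorem mem_of_mem_affineSpan {Q F : Set E} (h : IsFaceOf Q F) {y : E} (hy : y ∈ Q)
    (hspan : y ∈ affineSpan ℝ F) : y ∈ F := by
  obtain ⟨l, β, h1, _, h3⟩ := h.exists_functional
  exact h3 y hy (const_on_affineSpan h1 hspan)

theorem affineSpan_lt {Q F : Set E} (h : IsFaceOf Q F) :
    affineSpan ℝ F < affineSpan ℝ Q := by
  refine lt_of_le_of_ne (affineSpan_mono ℝ h.subset) (fun hEq => ?_)
  obtain ⟨y, hyQ, hyF⟩ := Set.exists_of_ssubset (ssubset_of_subset_of_ne h.subset h.2.2)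
  exact hyF (h.mem_of_mem_affineSpan hyQ (hEq ▸ subset_affineSpan ℝ Q hyQ))

end IsFaceOf

theorem dim_lt_of_span_lt {s t : Set E} (hs : s.Nonempty)
    (hlt : affineSpan ℝ s < affineSpan ℝ t) : polyDim s < polyDim t := by
  have hdir : (affineSpan ℝ s).direction < (affineSpan ℝ t).direction := by
    refine lt_of_le_of_ne (AffineSubspace.direction_le hlt.le) (fun hEq => ?_)
    obtain ⟨p, hp⟩ := (affineSpan_nonempty (k := ℝ)).2 hs
    exact hlt.ne (AffineSubspace.ext_of_direction_eq hEq ⟨p, hp, hlt.le hp⟩)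
  exact Submodule.finrank_lt_finrank_of_lt hdir

theorem IsFaceOf.polyDim_lt {Q F : Set E} (h : IsFaceOf Q F) : polyDim F < polyDim Q :=
  dim_lt_of_span_lt h.2.1 h.affineSpan_lt

theorem polyDim_mono {s t : Set E} (h : s ⊆ t) : polyDim s ≤ polyDim t :=
  Submodule.finrank_mono (AffineSubspace.direction_le (affineSpan_mono ℝ h))

theorem polyDim_lt_of_mem_diff {s t : Set E} (hs : s.Nonempty) (hsub : s ⊆ t) {y : E}
    (hyt : y ∈ t) (hy : y ∉ affineSpan ℝ s) : polyDim s < polyDim t := by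
  refine dim_lt_of_span_lt hs (lt_of_le_of_ne (affineSpan_mono ℝ hsub) fun hEq => ?_)
  exact hy (hEq ▸ subset_affineSpan ℝ t hyt)

/-- downward transitivity -/
theorem IsFaceOf.of_subset {Q F G : Set E} (hF : IsFaceOf Q F) (hG : IsFaceOf Q G)
    (hsub : G ⊆ F) (hne : G ≠ F) : IsFaceOf F G :=
  ⟨hG.1.mono hF.subset hsub, hG.2.1, hne⟩

/-- nested faces with equal dim are equal -/
theorem faces_eq_of_dim_le {Q F G : Set E} (hF : IsFaceOf Q F) (hG : IsFaceOf Q G)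
    (hsub : G ⊆ F) (hdim : polyDim F ≤ polyDim G) : G = F := by
  by_contra hne
  exact absurd hdim (not_le.2 (IsFaceOf.of_subset hF hG hsub hne).polyDim_lt)

theorem polyDim_insert_le {F : Set E} (hF : F.Nonempty) (x : E) :
    polyDim (insert x F) ≤ polyDim F + 1 := by
  obtain ⟨p, hp⟩ := hF
  have hp' : p ∈ affineSpan ℝ F := subset_affineSpan ℝ F hp
  have h1 : affineSpan ℝ (insert x F) = affineSpan ℝ (insert x (affineSpan ℝ F : Set E)) :=
    (affineSpan_insert_affineSpan ℝ x F).symm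
  have h2 : (affineSpan ℝ (insert x (affineSpan ℝ F : Set E))).direction =
      Submodule.span ℝ {x -ᵥ p} ⊔ (affineSpan ℝ F).direction :=
    AffineSubspace.direction_affineSpan_insert hp'
  unfold polyDim
  rw [h1, h2]
  refine le_trans (Submodule.finrank_add_le_finrank_add_finrank _ _) ?_
  have : Module.finrank ℝ (Submodule.span ℝ {x -ᵥ p}) ≤ 1 := by
    rcases eq_or_ne (x -ᵥ p) 0 with h | h
    · have : Submodule.span ℝ ({x -ᵥ p} : Set E) = ⊥ := by
        rw [h, Submodule.span_singleton_eq_bot]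
      rw [this, finrank_bot]; omega
    · rw [finrank_span_singleton h]
  omega


theorem mem_hull_max_filter (W : Finset E) {l : E →L[ℝ] ℝ} {β : ℝ}
    (hβmax : ∀ v ∈ W, l v ≤ β) {x : E} (hx : x ∈ convexHull ℝ (W : Set E)) (hlx : l x = β) :
    x ∈ convexHull ℝ ((W.filter fun v => l v = β : Finset E) : Set E) := by
  rw [Finset.mem_convexHull'] at hx
  obtain ⟨w, h0, h1, hxx⟩ := hx
  have hsupp : ∀ v ∈ W, l v ≠ β → w v = 0 := by
    intro v₀ hv₀ hlv₀
    by_contra hw0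
    have hwpos : 0 < w v₀ := lt_of_le_of_ne (h0 v₀ hv₀) (Ne.symm hw0)
    have hlt : l x < β := by
      have : l x = ∑ y ∈ W, w y * l y := by
        rw [← hxx, map_sum]; exact Finset.sum_congr rfl fun y _ => by
          rw [map_smul]; rfl
      rw [this]
      calc ∑ y ∈ W, w y * l y < ∑ y ∈ W, w y * β := by
            refine Finset.sum_lt_sum (fun i hi => ?_) ⟨v₀, hv₀, ?_⟩
            · exact mul_le_mul_of_nonneg_left (hβmax i hi) (h0 i hi)
            · exact mul_lt_mul_of_pos_left (lt_of_le_of_ne (hβmax v₀ hv₀) hlv₀) hwpos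
        _ = β := by rw [← Finset.sum_mul, h1, one_mul]
    exact absurd hlx (ne_of_lt hlt)
  rw [Finset.mem_convexHull']
  refine ⟨w, fun y hy => h0 y (Finset.mem_of_mem_filter y hy), ?_, ?_⟩
  · rw [← h1]
    exact Finset.sum_subset (Finset.filter_subset _ _)
      (fun v hv hnv => hsupp v hv (by simpa [hv] using hnv))
  · rw [← hxx]
    refine Finset.sum_subset (Finset.filter_subset _ _) (fun v hv hnv => ?_)
    rw [hsupp v hv (by simpa [hv] using hnv), zero_smul]

theorem exposed_set_eq_level {W : Finset E} (hWne : W.Nonempty) {Q : Set E}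
    (hQ : Q = convexHull ℝ (W : Set E)) (l : E →L[ℝ] ℝ) :
    {x ∈ Q | ∀ y ∈ Q, l y ≤ l x} = {x ∈ Q | l x = W.sup' hWne l} := by
  have hle : ∀ y ∈ Q, l y ≤ W.sup' hWne l := fun y hy =>
    hull_le (fun v hv => Finset.le_sup' l hv) (hQ ▸ hy)
  obtain ⟨vm, hvm, hvmax⟩ := Finset.exists_mem_eq_sup' hWne l
  have hvQ : vm ∈ Q := hQ ▸ subset_convexHull ℝ _ hvm
  ext x
  constructor
  · rintro ⟨hxQ, hmax⟩
    exact ⟨hxQ, le_antisymm (hle x hxQ) (hvmax ▸ hmax vm hvQ)⟩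
  · rintro ⟨hxQ, hlev⟩
    exact ⟨hxQ, fun y hy => hlev ▸ hle y hy⟩

theorem level_eq_hull_filter {W : Finset E} (hWne : W.Nonempty) {Q : Set E}
    (hQ : Q = convexHull ℝ (W : Set E)) (l : E →L[ℝ] ℝ) :
    {x ∈ Q | l x = W.sup' hWne l} =
      convexHull ℝ ((W.filter fun v => l v = W.sup' hWne l : Finset E) : Set E) := by
  ext x
  constructor
  · rintro ⟨hxQ, hlev⟩
    exact mem_hull_max_filter W (fun v hv => Finset.le_sup' l hv) (hQ ▸ hxQ) hlev
  · intro hx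
    have hsubW : ((W.filter fun v => l v = W.sup' hWne l : Finset E) : Set E) ⊆ (W : Set E) := by
      intro v hv; exact Finset.mem_coe.2 (Finset.mem_of_mem_filter _ (Finset.mem_coe.1 hv))
    refine ⟨hQ ▸ convexHull_mono hsubW hx, le_antisymm ?_ ?_⟩
    · exact hull_le (fun v hv => Finset.le_sup' l (Finset.mem_of_mem_filter _ hv)) hx
    · have : (-l) x ≤ -(W.sup' hWne l) := hull_le (fun v hv => by
        have := (Finset.mem_filter.1 hv).2
        simp [this]) hx
      simpa using this
theorem IsFaceOf.exists_level {Q F : Set E} (h : IsFaceOf Q F) :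
    ∃ (l : E →L[ℝ] ℝ) (β : ℝ), (∀ y ∈ Q, l y ≤ β) ∧ F = {x ∈ Q | l x = β} := by
  obtain ⟨l, β, h1, h2, h3⟩ := h.exists_functional
  exact ⟨l, β, h2, Set.Subset.antisymm (fun x hx => ⟨h.subset hx, h1 x hx⟩)
    (fun x hx => h3 x hx.1 hx.2)⟩

theorem IsFaceOf.eq_hull_filter {W : Finset E} {Q F : Set E}
    (hQ : Q = convexHull ℝ (W : Set E)) (hF : IsFaceOf Q F) :
    F = convexHull ℝ ((W.filter fun v => v ∈ F : Finset E) : Set E) := by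
  classical
  have hWne : W.Nonempty := by
    by_contra hW
    rw [Finset.not_nonempty_iff_eq_empty] at hW
    obtain ⟨x, hx⟩ := hF.2.1
    rw [hW] at hQ; simp at hQ
    exact (hQ ▸ hF.subset hx : x ∈ (∅ : Set E))
  obtain ⟨l, hl⟩ := hF.1 hF.2.1
  have hlev := exposed_set_eq_level hWne hQ l
  have hhull := level_eq_hull_filter hWne hQ l
  have hFeq : F = {x ∈ Q | l x = W.sup' hWne l} := by rw [hl]; exact hlev
  have hfilter : (W.filter fun v => l v = W.sup' hWne l) = (W.filter fun v => v ∈ F) := by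
    apply Finset.filter_congr
    intro v hv
    have hvQ : v ∈ Q := hQ ▸ subset_convexHull ℝ _ hv
    constructor
    · intro hlv; simp only [hFeq]; exact ⟨hvQ, by simpa using hlv⟩
    · intro hvF; rw [hFeq] at hvF; simpa using hvF.2
  conv_lhs => rw [hFeq, hhull]
  rw [hfilter]

theorem IsFaceOf.extremePoints_eq {Q F : Set E} (hF : IsFaceOf Q F) :
    F.extremePoints ℝ = Q.extremePoints ℝ ∩ F :=
  (hF.1.isExtreme.extremePoints_eq).trans (Set.inter_comm _ _)

theorem IsFaceOf.inter {Q F G : Set E} (hF : IsFaceOf Q F) (hG : IsFaceOf Q G)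
    (hne : (F ∩ G).Nonempty) : IsFaceOf Q (F ∩ G) := by
  refine ⟨hF.1.inter hG.1, hne, fun hEq => hF.2.2 ?_⟩
  exact Set.Subset.antisymm hF.subset (fun x hx => ((hEq ▸ Set.inter_subset_left) : Q ⊆ F) hx)

theorem faces_finite {W : Finset E} {Q : Set E} (hQ : Q = convexHull ℝ (W : Set E)) :
    {F : Set E | IsFaceOf Q F}.Finite := by
  classical
  refine Set.Finite.subset (Set.Finite.image (fun W' : Finset E => convexHull ℝ (W' : Set E))
    (W.powerset : Finset (Finset E)).finite_toSet) ?_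
  intro F hF
  exact ⟨W.filter fun v => v ∈ F, Finset.mem_coe.2 (Finset.mem_powerset.2 (Finset.filter_subset _ _)), (hF.eq_hull_filter hQ).symm⟩
theorem IsFaceOf.trans_face {W : Finset E} {Q σ τ : Set E}
    (hQ : Q = convexHull ℝ (W : Set E)) (hσ : IsFaceOf Q σ) (hτ : IsFaceOf σ τ) :
    IsFaceOf Q τ := by
  obtain ⟨s, α, hsle, hσeq⟩ := hσ.exists_level
  obtain ⟨u, γ, hule, hτeq⟩ := hτ.exists_level
  have hτsubσ := hτ.subset
  have hσsubQ := hσ.subset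
  have hWne : W.Nonempty := by
    by_contra hW
    rw [Finset.not_nonempty_iff_eq_empty] at hW
    obtain ⟨x, hx⟩ := hσ.2.1
    rw [hW] at hQ; simp at hQ
    exact (hQ ▸ hσsubQ hx : x ∈ (∅ : Set E))
  set Bout := W.filter (fun v => v ∉ σ) with hBoutdef
  have hBne : Bout.Nonempty := by
    by_contra hB
    rw [Finset.not_nonempty_iff_eq_empty] at hB
    have hWσ : (W : Set E) ⊆ σ := by
      intro v hv
      by_contra hvσ
      exact Finset.eq_empty_iff_forall_notMem.1 hB v (Finset.mem_filter.2 ⟨hv, hvσ⟩)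
    have hQσ : Q ⊆ σ := by
      rw [hQ]; exact convexHull_min hWσ (hσ.1.convex (hQ ▸ convex_convexHull ℝ _))
    exact hσ.2.2 (Set.Subset.antisymm hσsubQ hQσ)
  set t := 1 + Bout.sup' hBne (fun v => (u v - γ) / (α - s v)) with htdef
  set L := t • s + u with hLdef
  have hLv : ∀ v : E, L v = t * s v + u v := fun v => by
    simp [hLdef, ContinuousLinearMap.add_apply, ContinuousLinearMap.smul_apply, smul_eq_mul]
  have key1 : ∀ v ∈ W, L v ≤ t * α + γ ∧ (L v = t * α + γ ↔ v ∈ τ) := by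
    intro v hv
    have hvQ : v ∈ Q := hQ ▸ subset_convexHull ℝ _ hv
    by_cases hvσ : v ∈ σ
    · have hsv : s v = α := by rw [hσeq] at hvσ; exact hvσ.2
      have huv : u v ≤ γ := hule v hvσ
      rw [hLv, hsv]
      refine ⟨by linarith, ?_⟩
      constructor
      · intro hEq
        rw [hτeq]
        exact ⟨hvσ, by linarith⟩
      · intro hvτ
        rw [hτeq] at hvτ
        rw [hvτ.2]
    · have hvB : v ∈ Bout := Finset.mem_filter.2 ⟨hv, hvσ⟩
      have hslt : s v < α :=
        lt_of_le_of_ne (hsle v hvQ) (fun hEq => hvσ (hσeq ▸ ⟨hvQ, hEq⟩))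
      have hratio : (u v - γ) / (α - s v) < t :=
        lt_of_le_of_lt (Finset.le_sup' (fun v => (u v - γ) / (α - s v)) hvB) (lt_one_add _)
      have hkey : u v - γ < t * (α - s v) := (div_lt_iff₀ (by linarith)).1 hratio
      have hexpand : t * (α - s v) = t * α - t * s v := by ring
      have hlt : L v < t * α + γ := by rw [hLv]; linarith
      exact ⟨hlt.le, ⟨fun hEq => absurd hEq (ne_of_lt hlt),
        fun hvτ => absurd (hτsubσ hvτ) hvσ⟩⟩
  have hσhull : σ = convexHull ℝ ((W.filter fun v => v ∈ σ : Finset E) : Set E) :=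
    hσ.eq_hull_filter hQ
  have hτhull : τ = convexHull ℝ
      (((W.filter fun v => v ∈ σ).filter fun v => v ∈ τ : Finset E) : Set E) :=
    hτ.eq_hull_filter hσhull
  obtain ⟨v₀, hv₀W, hv₀τ⟩ : ∃ v₀ ∈ W, v₀ ∈ τ := by
    obtain ⟨x, hx⟩ := hτ.2.1
    have hne : ((W.filter fun v => v ∈ σ).filter fun v => v ∈ τ) ≠ ∅ := by
      intro hEq
      rw [hEq] at hτhull; simp at hτhull
      exact (hτhull ▸ hx : x ∈ (∅ : Set E))
    obtain ⟨v₀, hv₀⟩ := Finset.nonempty_iff_ne_empty.2 hne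
    have h1 := Finset.mem_filter.1 hv₀
    exact ⟨v₀, Finset.mem_of_mem_filter _ h1.1, h1.2⟩
  have hβL : W.sup' hWne L = t * α + γ := by
    refine le_antisymm (Finset.sup'_le _ _ fun v hv => (key1 v hv).1) ?_
    rw [← ((key1 v₀ hv₀W).2.2 hv₀τ)]
    exact Finset.le_sup' _ hv₀W
  have hfeq : (W.filter fun v => L v = W.sup' hWne L) =
      ((W.filter fun v => v ∈ σ).filter fun v => v ∈ τ) := by
    ext v
    simp only [Finset.mem_filter]
    constructor
    · rintro ⟨hvW, hvL⟩
      have hvτ := ((key1 v hvW).2.1 (hβL ▸ hvL))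
      exact ⟨⟨hvW, hτsubσ hvτ⟩, hvτ⟩
    · rintro ⟨⟨hvW, _⟩, hvτ⟩
      exact ⟨hvW, hβL ▸ ((key1 v hvW).2.2 hvτ)⟩
  have hset : {x ∈ Q | ∀ y ∈ Q, L y ≤ L x} = τ := by
    rw [exposed_set_eq_level hWne hQ L, level_eq_hull_filter hWne hQ L, hfeq, ← hτhull]
  refine ⟨fun _ => ⟨L, hset.symm⟩, hτ.2.1, fun hEq => ?_⟩
  exact hσ.2.2 (Set.Subset.antisymm hσsubQ (hEq ▸ hτsubσ))
theorem grow_core {W : Finset E} {Q F : Set E} (hQ : Q = convexHull ℝ (W : Set E))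
    (hF : IsFaceOf Q F) {x : E} (hxQ : x ∈ Q) (hxF : x ∉ F)
    {l : E →L[ℝ] ℝ} {β : ℝ} (hlle : ∀ y ∈ Q, l y ≤ β) (hFeq : F = {z ∈ Q | l z = β})
    {g : E →L[ℝ] ℝ} {c : ℝ} (hgF : ∀ y ∈ F, g y = c) (hgx : g x ≤ c)
    (hgt : ∃ w ∈ W, c < g w) :
    ∃ F', IsFaceOf Q F' ∧ F ⊆ F' ∧ x ∉ F' ∧ polyDim F < polyDim F' := by
  have hlx : l x < β := lt_of_le_of_ne (hlle x hxQ) (fun h => hxF (hFeq ▸ ⟨hxQ, h⟩))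
  set Θ := W.filter (fun v => c < g v) with hΘdef
  obtain ⟨w₀, hw₀W, hw₀⟩ := hgt
  have hΘne : Θ.Nonempty := ⟨w₀, Finset.mem_filter.2 ⟨hw₀W, hw₀⟩⟩
  have hΘlt : ∀ v ∈ Θ, l v < β ∧ c < g v := by
    intro v hv
    obtain ⟨hvW, hvg⟩ := Finset.mem_filter.1 hv
    have hvQ : v ∈ Q := hQ ▸ subset_convexHull ℝ _ hvW
    refine ⟨lt_of_le_of_ne (hlle v hvQ) (fun hEq => ?_), hvg⟩
    have : v ∈ F := hFeq ▸ ⟨hvQ, hEq⟩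
    exact absurd (hgF v this) (by linarith)
  set θ := Θ.inf' hΘne (fun v => (β - l v) / (g v - c)) with hθdef
  obtain ⟨vs, hvsΘ, hθeq⟩ := Finset.exists_mem_eq_inf' hΘne (fun v => (β - l v) / (g v - c))
  have hθpos : 0 < θ := by
    rw [hθdef, Finset.lt_inf'_iff]
    intro v hv
    obtain ⟨h1, h2⟩ := hΘlt v hv
    exact div_pos (by linarith) (by linarith)
  set L := l + θ • g with hLdef
  have hLv : ∀ p : E, L p = l p + θ * g p := fun p => by
    simp [hLdef, ContinuousLinearMap.add_apply, ContinuousLinearMap.smul_apply, smul_eq_mul]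
  have keyA : ∀ v ∈ W, L v ≤ β + θ * c := by
    intro v hv
    have hvQ : v ∈ Q := hQ ▸ subset_convexHull ℝ _ hv
    rcases le_or_gt (g v) c with hgc | hgc
    · rw [hLv]
      have := mul_le_mul_of_nonneg_left hgc hθpos.le
      have := hlle v hvQ
      linarith
    · have hvΘ : v ∈ Θ := Finset.mem_filter.2 ⟨hv, hgc⟩
      have hle : θ ≤ (β - l v) / (g v - c) := hθdef ▸ Finset.inf'_le _ hvΘ
      have : θ * (g v - c) ≤ β - l v := by
        rw [← le_div_iff₀ (by linarith)]; exact hle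
      rw [hLv]; linarith
  have keyB : L vs = β + θ * c := by
    obtain ⟨h1, h2⟩ := hΘlt vs hvsΘ
    have : θ * (g vs - c) = β - l vs := by
      rw [hθdef, hθeq, div_mul_cancel₀]
      linarith
    rw [hLv]; linarith
  have keyF : ∀ y ∈ F, L y = β + θ * c := by
    intro y hy
    have h1 : l y = β := (hFeq ▸ hy).2
    have h2 : g y = c := hgF y hy
    rw [hLv, h1, h2]
  have keyx : L x < β + θ * c := by
    have := mul_le_mul_of_nonneg_left hgx hθpos.le
    rw [hLv]; linarith
  have hmax : ∀ y ∈ Q, L y ≤ β + θ * c := fun y hy => hull_le keyA (hQ ▸ hy)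
  have hvsQ : vs ∈ Q := hQ ▸ subset_convexHull ℝ _ (Finset.mem_of_mem_filter _ hvsΘ)
  have hF'eq : {y ∈ Q | ∀ z ∈ Q, L z ≤ L y} = {y ∈ Q | L y = β + θ * c} := by
    ext y
    constructor
    · rintro ⟨hyQ, hymax⟩
      exact ⟨hyQ, le_antisymm (hmax y hyQ) (keyB ▸ hymax vs hvsQ)⟩
    · rintro ⟨hyQ, hyval⟩
      exact ⟨hyQ, fun z hz => hyval ▸ hmax z hz⟩
  set F' := {y ∈ Q | L y = β + θ * c} with hF'def
  have hFsub : F ⊆ F' := fun y hy => ⟨hF.subset hy, keyF y hy⟩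
  have hxF' : x ∉ F' := fun hx => absurd hx.2 (ne_of_lt keyx)
  have hvsF' : vs ∈ F' := ⟨hvsQ, keyB⟩
  have hface : IsFaceOf Q F' := by
    refine ⟨fun _ => ⟨L, hF'eq.symm⟩, ⟨vs, hvsF'⟩, fun hEq => hxF' (hEq ▸ hxQ)⟩
  have hvsnotspan : vs ∉ affineSpan ℝ F := by
    intro hmem
    have : g vs = c := const_on_affineSpan (fun y hy => hgF y hy) hmem
    exact absurd this (by linarith [(hΘlt vs hvsΘ).2])
  exact ⟨F', hface, hFsub, hxF',
    polyDim_lt_of_mem_diff hF.2.1 hFsub hvsF' hvsnotspan⟩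

theorem grow_face {W : Finset E} {Q F : Set E} (hQ : Q = convexHull ℝ (W : Set E))
    (hfull : affineSpan ℝ Q = ⊤) (hF : IsFaceOf Q F) {x : E} (hxQ : x ∈ Q) (hxF : x ∉ F)
    (hdim : polyDim F + 1 < Module.finrank ℝ E) :
    ∃ F', IsFaceOf Q F' ∧ F ⊆ F' ∧ x ∉ F' ∧ polyDim F < polyDim F' := by
  obtain ⟨l, β, hlle, hFeq⟩ := hF.exists_level
  have hFeq' : F = {z ∈ Q | l z = β} := hFeq
  set A := affineSpan ℝ (insert x F) with hAdef
  have hA : A ≠ ⊤ := by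
    intro hEq
    have h1 : polyDim (insert x F) ≤ polyDim F + 1 := polyDim_insert_le hF.2.1 x
    have h2 : polyDim (insert x F) = Module.finrank ℝ E := by
      unfold polyDim
      rw [← hAdef, hEq, AffineSubspace.direction_top, finrank_top]
    omega
  have hxA : x ∈ A := subset_affineSpan ℝ _ (Set.mem_insert x F)
  have hdirA : A.direction ≠ ⊤ := by
    intro hEq
    apply hA
    rw [eq_top_iff]
    intro p _
    have : p -ᵥ x ∈ A.direction := by rw [hEq]; trivial
    have := AffineSubspace.vadd_mem_of_mem_direction this hxA
    simpa using this
  obtain ⟨g, hg0, hgU⟩ := exists_functional_vanishing hdirA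
  have hgconst : ∀ p ∈ A, g p = g x := by
    intro p hp
    have h1 : p -ᵥ x ∈ A.direction := AffineSubspace.vsub_mem_direction hp hxA
    have := hgU _ h1
    rw [vsub_eq_sub, map_sub] at this
    linarith
  have hgF : ∀ y ∈ F, g y = g x := fun y hy =>
    hgconst y (subset_affineSpan ℝ _ (Set.mem_insert_of_mem x hy))
  have hspanW : affineSpan ℝ (W : Set E) = ⊤ := by
    rw [hQ, affineSpan_convexHull] at hfull; exact hfull
  have hnc : ∃ w ∈ W, g w ≠ g x := by
    by_contra hcon
    push_neg at hcon
    have hcon' : ∀ y ∈ (W : Set E), g y = g x := fun y hy => hcon y hy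
    have hall : ∀ p : E, g p = g x := by
      intro p
      exact const_on_affineSpan hcon' (by rw [hspanW]; trivial)
    have hc0 : g x = 0 := by
      have := hall 0; rw [map_zero] at this; exact this.symm
    apply hg0
    ext p
    have := hall p
    rw [hc0] at this
    simpa using this
  obtain ⟨w, hwW, hwne⟩ := hnc
  rcases lt_or_gt_of_ne hwne with hlt | hgt
  · -- use -g
    exact grow_core hQ hF hxQ hxF hlle hFeq' (g := -g) (c := -(g x))
      (fun y hy => by rw [ContinuousLinearMap.neg_apply, hgF y hy])
      (by rw [ContinuousLinearMap.neg_apply])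
      ⟨w, hwW, by rw [ContinuousLinearMap.neg_apply]; linarith⟩
  · exact grow_core hQ hF hxQ hxF hlle hFeq' hgF le_rfl ⟨w, hwW, hgt⟩

theorem polyDim_top {Q : Set E} (hQ : affineSpan ℝ Q = ⊤) : polyDim Q = Module.finrank ℝ E := by
  unfold polyDim; rw [hQ, AffineSubspace.direction_top, finrank_top]

theorem exists_facet_above {W : Finset E} {Q F : Set E} (hQ : Q = convexHull ℝ (W : Set E))
    (hfull : affineSpan ℝ Q = ⊤) (hF : IsFaceOf Q F) {x : E} (hxQ : x ∈ Q) (hxF : x ∉ F) :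
    ∃ G, IsFaceOf Q G ∧ polyDim G = Module.finrank ℝ E - 1 ∧ F ⊆ G ∧ x ∉ G := by
  set D := Module.finrank ℝ E with hD
  have hdimQ : polyDim Q = D := polyDim_top hfull
  suffices h : ∀ (n : ℕ) (F : Set E), IsFaceOf Q F → x ∉ F → D - 1 - polyDim F ≤ n →
      ∃ G, IsFaceOf Q G ∧ polyDim G = D - 1 ∧ F ⊆ G ∧ x ∉ G by
    exact h D F hF hxF (by omega)
  intro n
  induction n with
  | zero =>
    intro F hF hxF hn
    have hlt : polyDim F < D := hdimQ ▸ hF.polyDim_lt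
    exact ⟨F, hF, by omega, subset_rfl, hxF⟩
  | succ n ih =>
    intro F hF hxF hn
    rcases eq_or_ne (polyDim F) (D - 1) with hEq | hne
    · exact ⟨F, hF, hEq, subset_rfl, hxF⟩
    · have hlt : polyDim F < D := hdimQ ▸ hF.polyDim_lt
      have hdim : polyDim F + 1 < D := by omega
      obtain ⟨F', hF', hsub, hxF', hgrow⟩ := grow_face hQ hfull hF hxQ hxF hdim
      obtain ⟨G, hG, hGdim, hsub', hxG⟩ := ih F' hF' hxF' (by omega)
      exact ⟨G, hG, hGdim, hsub.trans hsub', hxG⟩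
theorem polytope_hull_ext {P : Set E} (hP : IsPolytope P) :
    ∃ V : Finset E, (V : Set E) = P.extremePoints ℝ ∧ P = convexHull ℝ (V : Set E) := by
  obtain ⟨S, hSfin, rfl⟩ := hP
  have hext : (convexHull ℝ S).extremePoints ℝ ⊆ S := extremePoints_convexHull_subset
  have hfin : ((convexHull ℝ S).extremePoints ℝ).Finite := hSfin.subset hext
  refine ⟨hfin.toFinset, hfin.coe_toFinset, ?_⟩
  rw [hfin.coe_toFinset]
  have h1 := closure_convexHull_extremePoints (hSfin.isCompact_convexHull ℝ)
    (convex_convexHull ℝ S)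
  have h2 : IsClosed (convexHull ℝ ((convexHull ℝ S).extremePoints ℝ)) :=
    hfin.isClosed_convexHull ℝ
  conv_lhs => rw [← h1, h2.closure_eq]

section Counting

variable {P : Set E} {V : Finset E}

theorem ambientFacets_finite (hPV : P = convexHull ℝ (V : Set E)) :
    (ambientFacets P).Finite :=
  (faces_finite hPV).subset (fun F hF => hF.1)

theorem factA_count (hPV : P = convexHull ℝ (V : Set E)) (hfull : affineSpan ℝ P = ⊤)
    {σ : Set E} (hσ : IsFaceOf P σ) :
    {τ | IsFaceOf σ τ ∧ polyDim τ = polyDim σ - 1}.ncard ≤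
      {F ∈ ambientFacets P | ¬ σ ⊆ F}.ncard := by
  classical
  set 𝒟 := {τ | IsFaceOf σ τ ∧ polyDim τ = polyDim σ - 1} with h𝒟
  have hstep : ∀ τ ∈ 𝒟, ∃ G, (G ∈ ambientFacets P ∧ ¬ σ ⊆ G) ∧ τ ⊆ G := by
    rintro τ ⟨hτ, hτdim⟩
    have hτP : IsFaceOf P τ := IsFaceOf.trans_face hPV hσ hτ
    obtain ⟨x, hxσ, hxτ⟩ := Set.exists_of_ssubset (ssubset_of_subset_of_ne hτ.subset hτ.2.2)
    obtain ⟨G, hG, hGdim, hsub, hxG⟩ :=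
      exists_facet_above hPV hfull hτP (hσ.subset hxσ) hxτ
    exact ⟨G, ⟨⟨hG, hGdim⟩, fun hσG => hxG (hσG hxσ)⟩, hsub⟩
  set Φ : Set E → Set E := fun τ => if h : τ ∈ 𝒟 then (hstep τ h).choose else ∅ with hΦ
  have hmaps : ∀ τ ∈ 𝒟, Φ τ ∈ {F ∈ ambientFacets P | ¬ σ ⊆ F} := by
    intro τ hτ; rw [hΦ]; simp only [dif_pos hτ]; exact (hstep τ hτ).choose_spec.1
  have hsubΦ : ∀ τ ∈ 𝒟, τ ⊆ Φ τ := by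
    intro τ hτ; rw [hΦ]; simp only [dif_pos hτ]; exact (hstep τ hτ).choose_spec.2
  refine Set.ncard_le_ncard_of_injOn Φ hmaps ?_
    (((ambientFacets_finite hPV).subset (fun F hF => hF.1)))
  intro τ₁ hτ₁ τ₂ hτ₂ hEq
  obtain ⟨hτ₁f, hτ₁dim⟩ := hτ₁
  obtain ⟨hτ₂f, hτ₂dim⟩ := hτ₂
  have hτ₁P : IsFaceOf P τ₁ := IsFaceOf.trans_face hPV hσ hτ₁f
  have hτ₂P : IsFaceOf P τ₂ := IsFaceOf.trans_face hPV hσ hτ₂f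
  set G := Φ τ₁ with hG
  have hGmem := hmaps τ₁ ⟨hτ₁f, hτ₁dim⟩
  have h1 : τ₁ ⊆ G := hsubΦ τ₁ ⟨hτ₁f, hτ₁dim⟩
  have h2 : τ₂ ⊆ G := hEq ▸ hsubΦ τ₂ ⟨hτ₂f, hτ₂dim⟩
  have hGface : IsFaceOf P G := hGmem.1.1
  have hρne : (σ ∩ G).Nonempty := hτ₁f.2.1.mono (Set.subset_inter hτ₁f.subset h1)
  have hρ : IsFaceOf P (σ ∩ G) := hσ.inter hGface hρne
  have hρsubσ : σ ∩ G ⊆ σ := Set.inter_subset_left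
  have hρneσ : σ ∩ G ≠ σ := by
    intro hEq2
    refine hGmem.2 (fun y hy => ?_)
    rw [← hEq2] at hy
    exact hy.2
  have hρlt : polyDim (σ ∩ G) < polyDim σ := (IsFaceOf.of_subset hσ hρ hρsubσ hρneσ).polyDim_lt
  have hτ₁lt : polyDim τ₁ < polyDim σ := hτ₁f.polyDim_lt
  have hρdim : polyDim (σ ∩ G) ≤ polyDim τ₁ := by omega
  have e1 : τ₁ = σ ∩ G :=
    faces_eq_of_dim_le hρ hτ₁P (Set.subset_inter hτ₁f.subset h1) hρdim
  have hρdim2 : polyDim (σ ∩ G) ≤ polyDim τ₂ := by omega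
  have e2 : τ₂ = σ ∩ G :=
    faces_eq_of_dim_le hρ hτ₂P (Set.subset_inter hτ₂f.subset h2) hρdim2
  rw [e1, e2]

theorem factB_count (hPV : P = convexHull ℝ (V : Set E))
    (hVext : (V : Set E) = P.extremePoints ℝ)
    {σ : Set E} (hσ : IsFaceOf P σ) :
    {τ | IsFaceOf P τ ∧ polyDim τ = polyDim σ + 1 ∧ σ ⊆ τ}.ncard ≤
      ((P.extremePoints ℝ) \ σ).ncard := by
  classical
  set 𝒯 := {τ | IsFaceOf P τ ∧ polyDim τ = polyDim σ + 1 ∧ σ ⊆ τ} with h𝒯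
  have hstep : ∀ τ ∈ 𝒯, ∃ v, (v ∈ P.extremePoints ℝ \ σ) ∧ v ∈ τ := by
    rintro τ ⟨hτ, hτdim, hστ⟩
    by_contra hcon
    push_neg at hcon
    have hsub : ((V.filter fun v => v ∈ τ : Finset E) : Set E) ⊆ σ := by
      intro v hv
      obtain ⟨hvV, hvτ⟩ := Finset.mem_filter.1 (Finset.mem_coe.1 hv)
      by_contra hvσ
      exact hcon v ⟨hVext ▸ Finset.mem_coe.2 hvV, hvσ⟩ hvτ
    have hτσ : τ ⊆ σ := by
      rw [hτ.eq_hull_filter hPV]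
      exact convexHull_min hsub (hσ.1.convex (hPV ▸ convex_convexHull ℝ _))
    have := polyDim_mono hτσ
    omega
  set Ψ : Set E → E := fun τ => if h : τ ∈ 𝒯 then (hstep τ h).choose else 0 with hΨ
  have hmaps : ∀ τ ∈ 𝒯, Ψ τ ∈ P.extremePoints ℝ \ σ := by
    intro τ hτ; rw [hΨ]; simp only [dif_pos hτ]; exact (hstep τ hτ).choose_spec.1
  have hmem : ∀ τ ∈ 𝒯, Ψ τ ∈ τ := by
    intro τ hτ; rw [hΨ]; simp only [dif_pos hτ]; exact (hstep τ hτ).choose_spec.2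
  refine Set.ncard_le_ncard_of_injOn Ψ hmaps ?_
    (((hVext ▸ V.finite_toSet).diff (t := σ)))
  intro τ₁ hτ₁ τ₂ hτ₂ hEq
  obtain ⟨hτ₁f, hτ₁dim, hστ₁⟩ := hτ₁
  obtain ⟨hτ₂f, hτ₂dim, hστ₂⟩ := hτ₂
  set v := Ψ τ₁ with hv
  have hv1 : v ∈ τ₁ := hmem τ₁ ⟨hτ₁f, hτ₁dim, hστ₁⟩
  have hv2 : v ∈ τ₂ := hEq ▸ hmem τ₂ ⟨hτ₂f, hτ₂dim, hστ₂⟩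
  have hvext := hmaps τ₁ ⟨hτ₁f, hτ₁dim, hστ₁⟩
  have hρne : (τ₁ ∩ τ₂).Nonempty := ⟨v, hv1, hv2⟩
  have hρ : IsFaceOf P (τ₁ ∩ τ₂) := hτ₁f.inter hτ₂f hρne
  have hσρ : σ ⊆ τ₁ ∩ τ₂ := Set.subset_inter hστ₁ hστ₂
  have hστ₁face : IsFaceOf τ₁ σ :=
    IsFaceOf.of_subset hτ₁f hσ hστ₁ (fun h => by rw [h] at hτ₁dim; omega)
  have hvspan : v ∉ affineSpan ℝ σ := fun hmem2 =>
    hvext.2 (hστ₁face.mem_of_mem_affineSpan hv1 hmem2)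
  have hρgt : polyDim σ < polyDim (τ₁ ∩ τ₂) :=
    polyDim_lt_of_mem_diff hσ.2.1 hσρ ⟨hv1, hv2⟩ hvspan
  have e1 : τ₁ ∩ τ₂ = τ₁ :=
    faces_eq_of_dim_le hτ₁f hρ Set.inter_subset_left (by omega)
  have e2 : τ₁ ∩ τ₂ = τ₂ :=
    faces_eq_of_dim_le hτ₂f hρ Set.inter_subset_right (by omega)
  exact e1.symm.trans e2

end Counting
section Key

variable {P : Set E} {V : Finset E}

theorem facets_partition (hPV : P = convexHull ℝ (V : Set E)) (σ : Set E) :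
    {F ∈ ambientFacets P | σ ⊆ F}.ncard + {F ∈ ambientFacets P | ¬ σ ⊆ F}.ncard
      = (ambientFacets P).ncard := by
  have hfin := ambientFacets_finite hPV
  rw [← Set.ncard_union_eq ?_ (hfin.subset (fun F hF => hF.1)) (hfin.subset (fun F hF => hF.1))]
  · congr 1
    ext F
    by_cases h : σ ⊆ F <;> simp [h]
  · rw [Set.disjoint_iff_forall_ne]
    rintro F hF G hG rfl
    exact hG.2 hF.2

theorem key_ineq (hPV : P = convexHull ℝ (V : Set E))
    (hVext : (V : Set E) = P.extremePoints ℝ) (hfull : affineSpan ℝ P = ⊤)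
    {σ : Set E} (hσ : IsFaceOf P σ)
    (hcase : (σ.extremePoints ℝ).ncard ≤
        {τ | IsFaceOf σ τ ∧ polyDim τ = polyDim σ - 1}.ncard ∨
      {F ∈ ambientFacets P | σ ⊆ F}.ncard ≤
        {τ | IsFaceOf P τ ∧ polyDim τ = polyDim σ + 1 ∧ σ ⊆ τ}.ncard) :
    (σ.extremePoints ℝ).ncard + {F ∈ ambientFacets P | σ ⊆ F}.ncard ≤
      max (ambientFacets P).ncard (P.extremePoints ℝ).ncard := by
  have hpart := facets_partition hPV σ
  rcases hcase with hi | hii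
  · have h1 := factA_count hPV hfull hσ
    have : (σ.extremePoints ℝ).ncard ≤ {F ∈ ambientFacets P | ¬ σ ⊆ F}.ncard := hi.trans h1
    refine le_trans ?_ (le_max_left _ _)
    omega
  · have h1 := factB_count hPV hVext hσ
    have hextfin : (P.extremePoints ℝ).Finite := hVext ▸ V.finite_toSet
    have hparte := Set.ncard_inter_add_ncard_diff_eq_ncard (P.extremePoints ℝ) σ hextfin
    have ha : (σ.extremePoints ℝ).ncard = ((P.extremePoints ℝ) ∩ σ).ncard := by
      rw [hσ.extremePoints_eq]
    refine le_trans ?_ (le_max_right _ _)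
    omega

end Key
section Hall

variable {P : Set E} {V : Finset E}

theorem hall_vertex_side (hPV : P = convexHull ℝ (V : Set E))
    (hVext : (V : Set E) = P.extremePoints ℝ)
    (hkey : ∀ σ : Set E, IsFaceOf P σ →
      (σ.extremePoints ℝ).ncard + {F ∈ ambientFacets P | σ ⊆ F}.ncard ≤
        max (ambientFacets P).ncard (P.extremePoints ℝ).ncard)
    (hnm : (P.extremePoints ℝ).ncard ≤ (ambientFacets P).ncard) :
    ∃ f : (P.extremePoints ℝ) → (ambientFacets P), Function.Injective f ∧
      ∀ v, (v : E) ∉ (f v : Set E) := by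
  classical
  have h𝓕fin := ambientFacets_finite hPV
  have hextfin : (P.extremePoints ℝ).Finite := hVext ▸ V.finite_toSet
  set t : (P.extremePoints ℝ) → Finset (Set E) :=
    fun v => h𝓕fin.toFinset.filter (fun F => (v : E) ∉ F) with ht
  have hall : ∀ s : Finset (P.extremePoints ℝ), s.card ≤ (s.biUnion t).card := by
    intro s
    rcases s.eq_empty_or_nonempty with rfl | hsne
    · simp
    set W : Set E := Subtype.val '' (↑s : Set (P.extremePoints ℝ)) with hW
    have hWsub : W ⊆ P.extremePoints ℝ := by rintro _ ⟨v, _, rfl⟩; exact v.2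
    have hWne : W.Nonempty := (Finset.coe_nonempty.2 hsne).image _
    have hscard : s.card = W.ncard := by
      rw [hW, Set.ncard_image_of_injective _ Subtype.val_injective, Set.ncard_coe_finset]
    have hBcoe : (↑(s.biUnion t) : Set (Set E)) = {F ∈ ambientFacets P | ¬ W ⊆ F} := by
      ext F
      constructor
      · intro hF
        obtain ⟨v, hvs, hvF⟩ := Finset.mem_biUnion.1 (Finset.mem_coe.1 hF)
        rw [ht, Finset.mem_filter, Set.Finite.mem_toFinset] at hvF
        exact ⟨hvF.1, fun hWF => hvF.2 (hWF ⟨v, hvs, rfl⟩)⟩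
      · rintro ⟨hF, hnW⟩
        obtain ⟨x, hxW, hxF⟩ := Set.not_subset.1 hnW
        obtain ⟨v, hvs, rfl⟩ := hxW
        exact Finset.mem_coe.2 (Finset.mem_biUnion.2 ⟨v, hvs,
          Finset.mem_filter.2 ⟨(Set.Finite.mem_toFinset _).2 hF, hxF⟩⟩)
    have hcardB : (s.biUnion t).card = {F ∈ ambientFacets P | ¬ W ⊆ F}.ncard := by
      rw [← hBcoe, Set.ncard_coe_finset]
    rw [hscard, hcardB]
    set C := {F ∈ ambientFacets P | W ⊆ F} with hC
    rcases C.eq_empty_or_nonempty with hCe | hCne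
    · have hBall : {F ∈ ambientFacets P | ¬ W ⊆ F} = ambientFacets P := by
        ext F
        refine ⟨fun h => h.1, fun hF => ⟨hF, fun hWF => ?_⟩⟩
        exact Set.eq_empty_iff_forall_notMem.1 hCe F ⟨hF, hWF⟩
      rw [hBall]
      exact (Set.ncard_le_ncard hWsub hextfin).trans hnm
    · have hCfin : C.Finite := h𝓕fin.subset (fun F hF => hF.1)
      have hCfne : hCfin.toFinset.Nonempty := by rwa [Set.Finite.toFinset_nonempty]
      set σ := ⋂₀ C with hσdef
      have hWσ : W ⊆ σ := fun x hx => Set.mem_sInter.2 (fun F hF => hF.2 hx)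
      have hsexp : IsExposed ℝ P σ := by
        have h1 := IsExposed.sInter hCfne
          (fun B hB => ((Set.Finite.mem_toFinset hCfin).1 hB).1.1.1)
        rwa [Set.Finite.coe_toFinset] at h1
      obtain ⟨F₀, hF₀⟩ := hCne
      have hσsub : σ ⊆ F₀ := Set.sInter_subset_of_mem hF₀
      have hσface : IsFaceOf P σ :=
        ⟨hsexp, hWne.mono hWσ, fun hEq =>
          hF₀.1.1.2.2 (Set.Subset.antisymm hF₀.1.1.subset (hEq ▸ hσsub))⟩
      have hCeq : {F ∈ ambientFacets P | σ ⊆ F} = C := by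
        ext F
        constructor
        · rintro ⟨hF, hσF⟩; exact ⟨hF, hWσ.trans hσF⟩
        · rintro ⟨hF, hWF⟩; exact ⟨hF, Set.sInter_subset_of_mem ⟨hF, hWF⟩⟩
      have hBeq : {F ∈ ambientFacets P | ¬ W ⊆ F} = {F ∈ ambientFacets P | ¬ σ ⊆ F} := by
        ext F
        constructor
        · rintro ⟨hF, hnW⟩; exact ⟨hF, fun hσF => hnW (hWσ.trans hσF)⟩
        · rintro ⟨hF, hnσ⟩
          exact ⟨hF, fun hWF => hnσ (Set.sInter_subset_of_mem ⟨hF, hWF⟩)⟩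
      have hk := hkey σ hσface
      rw [hCeq, max_eq_left hnm] at hk
      have hpart := facets_partition hPV σ
      rw [hCeq] at hpart
      have haW : W.ncard ≤ (σ.extremePoints ℝ).ncard := by
        rw [hσface.extremePoints_eq]
        exact Set.ncard_le_ncard (Set.subset_inter hWsub hWσ) (hextfin.inter_of_left σ)
      rw [hBeq]
      omega
  obtain ⟨f, hfinj, hft⟩ := (Finset.all_card_le_biUnion_card_iff_exists_injective t).1 hall
  have hmem : ∀ v, f v ∈ ambientFacets P ∧ (v : E) ∉ f v := by
    intro v
    have h1 := hft v
    rw [ht, Finset.mem_filter, Set.Finite.mem_toFinset] at h1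
    exact h1
  refine ⟨fun v => ⟨f v, (hmem v).1⟩, fun a b hab => hfinj (congrArg Subtype.val hab),
    fun v => (hmem v).2⟩

theorem hall_facet_side (hPV : P = convexHull ℝ (V : Set E))
    (hVext : (V : Set E) = P.extremePoints ℝ)
    (hkey : ∀ σ : Set E, IsFaceOf P σ →
      (σ.extremePoints ℝ).ncard + {F ∈ ambientFacets P | σ ⊆ F}.ncard ≤
        max (ambientFacets P).ncard (P.extremePoints ℝ).ncard)
    (hmn : (ambientFacets P).ncard ≤ (P.extremePoints ℝ).ncard) :
    ∃ g : (ambientFacets P) → (P.extremePoints ℝ), Function.Injective g ∧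
      ∀ F : (ambientFacets P), (g F : E) ∉ (F : Set E) := by
  classical
  have h𝓕fin := ambientFacets_finite hPV
  have hextfin : (P.extremePoints ℝ).Finite := hVext ▸ V.finite_toSet
  set t : (ambientFacets P) → Finset E :=
    fun F => hextfin.toFinset.filter (fun v => v ∉ (F : Set E)) with ht
  have hall : ∀ s : Finset (ambientFacets P), s.card ≤ (s.biUnion t).card := by
    intro s
    rcases s.eq_empty_or_nonempty with rfl | hsne
    · simp
    set S : Set (Set E) := Subtype.val '' (↑s : Set (ambientFacets P)) with hS
    have hSsub : S ⊆ ambientFacets P := by rintro _ ⟨F, _, rfl⟩; exact F.2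
    have hSne : S.Nonempty := (Finset.coe_nonempty.2 hsne).image _
    have hscard : s.card = S.ncard := by
      rw [hS, Set.ncard_image_of_injective _ Subtype.val_injective, Set.ncard_coe_finset]
    have hBcoe : (↑(s.biUnion t) : Set E) = {v ∈ P.extremePoints ℝ | ∃ F ∈ S, v ∉ F} := by
      ext x
      constructor
      · intro hx
        obtain ⟨F, hFs, hxF⟩ := Finset.mem_biUnion.1 (Finset.mem_coe.1 hx)
        rw [ht, Finset.mem_filter, Set.Finite.mem_toFinset] at hxF
        exact ⟨hxF.1, ⟨F, ⟨F, hFs, rfl⟩, hxF.2⟩⟩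
      · rintro ⟨hx, F, hFS, hxF⟩
        obtain ⟨F', hF's, rfl⟩ := hFS
        exact Finset.mem_coe.2 (Finset.mem_biUnion.2 ⟨F', hF's,
          Finset.mem_filter.2 ⟨(Set.Finite.mem_toFinset _).2 hx, hxF⟩⟩)
    have hcardB : (s.biUnion t).card = {v ∈ P.extremePoints ℝ | ∃ F ∈ S, v ∉ F}.ncard := by
      rw [← hBcoe, Set.ncard_coe_finset]
    rw [hscard, hcardB]
    set σ := ⋂₀ S with hσdef
    rcases Set.eq_empty_or_nonempty σ with hσe | hσne
    · have hBall : {v ∈ P.extremePoints ℝ | ∃ F ∈ S, v ∉ F} = P.extremePoints ℝ := by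
        ext v
        refine ⟨fun h => h.1, fun hv => ⟨hv, ?_⟩⟩
        by_contra hcon
        push_neg at hcon
        have : v ∈ σ := Set.mem_sInter.2 hcon
        rw [hσe] at this
        exact this
      rw [hBall]
      exact (Set.ncard_le_ncard hSsub h𝓕fin).trans hmn
    · have hSfin : S.Finite := h𝓕fin.subset hSsub
      have hSfne : hSfin.toFinset.Nonempty := by rwa [Set.Finite.toFinset_nonempty]
      have hsexp : IsExposed ℝ P σ := by
        have h1 := IsExposed.sInter hSfne
          (fun B hB => (hSsub ((Set.Finite.mem_toFinset hSfin).1 hB)).1.1)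
        rwa [Set.Finite.coe_toFinset] at h1
      obtain ⟨F₀, hF₀⟩ := hSne
      have hσsub : σ ⊆ F₀ := Set.sInter_subset_of_mem hF₀
      have hσface : IsFaceOf P σ :=
        ⟨hsexp, hσne, fun hEq =>
          (hSsub hF₀).1.2.2 (Set.Subset.antisymm (hSsub hF₀).1.subset (hEq ▸ hσsub))⟩
      have hk := hkey σ hσface
      rw [max_eq_right hmn] at hk
      have hSb : S.ncard ≤ {F ∈ ambientFacets P | σ ⊆ F}.ncard := by
        refine Set.ncard_le_ncard (fun F hF => ⟨hSsub hF, Set.sInter_subset_of_mem hF⟩)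
          (h𝓕fin.subset (fun F hF => hF.1))
      have hBeq : {v ∈ P.extremePoints ℝ | ∃ F ∈ S, v ∉ F} = (P.extremePoints ℝ) \ σ := by
        ext v
        constructor
        · rintro ⟨hv, F, hFS, hvF⟩
          exact ⟨hv, fun hvσ => hvF (Set.mem_sInter.1 hvσ F hFS)⟩
        · rintro ⟨hv, hvσ⟩
          refine ⟨hv, ?_⟩
          by_contra hcon
          push_neg at hcon
          exact hvσ (Set.mem_sInter.2 hcon)
      have hparte := Set.ncard_inter_add_ncard_diff_eq_ncard (P.extremePoints ℝ) σ hextfin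
      have ha : (σ.extremePoints ℝ).ncard = ((P.extremePoints ℝ) ∩ σ).ncard := by
        rw [hσface.extremePoints_eq]
      rw [hBeq]
      omega
  obtain ⟨f, hfinj, hft⟩ := (Finset.all_card_le_biUnion_card_iff_exists_injective t).1 hall
  have hmem : ∀ F, f F ∈ P.extremePoints ℝ ∧ (f F) ∉ (F : Set E) := by
    intro F
    have h1 := hft F
    rw [ht, Finset.mem_filter, Set.Finite.mem_toFinset] at h1
    exact h1
  refine ⟨fun F => ⟨f F, (hmem F).1⟩, fun a b hab => hfinj (congrArg Subtype.val hab),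
    fun F => (hmem F).2⟩

end Hall


/-- If for every face `σ` of `P`, either `σ` (as a polytope) has at least
as many facets as vertices, or the number of faces of `P` of dimension `dim σ + 1`
containing `σ` is at least the number of facets of `P` containing `σ`, then `P` has a
vertex-facet assignment. -/
theorem vfa_of_face_condition {d : ℕ} (P : Set (Fin d → ℝ))
    (hP : IsPolytope P) (hfull : affineSpan ℝ P = ⊤)
    (h : ∀ σ : Set (Fin d → ℝ), IsFaceOf P σ →
      (σ.extremePoints ℝ).ncard ≤ {τ | IsFaceOf σ τ ∧ polyDim τ = polyDim σ - 1}.ncard ∨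
      {F ∈ ambientFacets P | σ ⊆ F}.ncard ≤
        {τ | IsFaceOf P τ ∧ polyDim τ = polyDim σ + 1 ∧ σ ⊆ τ}.ncard) :
    HasVFA P := by
  obtain ⟨V, hVext, hPV⟩ := polytope_hull_ext hP
  have hkey : ∀ σ : Set (Fin d → ℝ), IsFaceOf P σ →
      (σ.extremePoints ℝ).ncard + {F ∈ ambientFacets P | σ ⊆ F}.ncard ≤
        max (ambientFacets P).ncard (P.extremePoints ℝ).ncard :=
    fun σ hσ => key_ineq hPV hVext hfull hσ (h σ hσ)
  rcases le_total (P.extremePoints ℝ).ncard (ambientFacets P).ncard with hle | hle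
  · exact Or.inl (hall_vertex_side hPV hVext hkey hle)
  · exact Or.inr (hall_facet_side hPV hVext hkey hle)
end

section
/- Every simplicial full-dimensional polytope P ⊆ ℝ^d (i.e., every facet of P is a (d−1)-dimensional simplex, equivalently every facet contains exactly d vertices of P) has a vertex-facet assignment. -/
open Set

namespace VFAAux

variable {d : ℕ}

/-- `a • f + b • g` as an affine map to `ℝ`. -/
noncomputable def aCombo (f g : (Fin d → ℝ) →ᵃ[ℝ] ℝ) (a b : ℝ) : (Fin d → ℝ) →ᵃ[ℝ] ℝ where
  toFun x := a * f x + b * g x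
  linear := a • f.linear + b • g.linear
  map_vadd' p v := by
    simp only [vadd_eq_add, LinearMap.add_apply, LinearMap.smul_apply, smul_eq_mul]
    rw [show f (v + p) = f.linear v + f p from f.map_vadd p v,
      show g (v + p) = g.linear v + g.linear p + (g p - g.linear p) by
        have := g.map_vadd p v; simp only [vadd_eq_add] at this; rw [this]; ring]
    ring

@[simp] lemma aCombo_apply (f g : (Fin d → ℝ) →ᵃ[ℝ] ℝ) (a b : ℝ) (x : Fin d → ℝ) :
    aCombo f g a b x = a * f x + b * g x := rfl

/-- The affine map `x ↦ φ (x - z)`. -/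
noncomputable def ofLinear (φ : (Fin d → ℝ) →ₗ[ℝ] ℝ) (z : Fin d → ℝ) :
    (Fin d → ℝ) →ᵃ[ℝ] ℝ where
  toFun x := φ (x - z)
  linear := φ
  map_vadd' p v := by
    simp only [vadd_eq_add]
    rw [show v + p - z = v + (p - z) by abel, map_add]

@[simp] lemma ofLinear_apply (φ : (Fin d → ℝ) →ₗ[ℝ] ℝ) (z x : Fin d → ℝ) :
    ofLinear φ z x = φ (x - z) := rfl

/-- An affine map nonnegative on a set is nonnegative on its convex hull. -/
lemma aff_nonneg_on_hull {h : (Fin d → ℝ) →ᵃ[ℝ] ℝ} {s : Set (Fin d → ℝ)}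
    (hs : ∀ x ∈ s, 0 ≤ h x) {x : Fin d → ℝ} (hx : x ∈ convexHull ℝ s) : 0 ≤ h x := by
  have h1 : h x ∈ h '' (convexHull ℝ s) := ⟨x, hx, rfl⟩
  rw [AffineMap.image_convexHull] at h1
  have h2 : convexHull ℝ (h '' s) ⊆ Ici 0 :=
    convexHull_min (by rintro y ⟨u, hu, rfl⟩; exact hs u hu) (convex_Ici 0)
  exact h2 h1

/-- An affine map vanishing on a set vanishes on its affine span. -/
lemma aff_zero_on_affineSpan {h : (Fin d → ℝ) →ᵃ[ℝ] ℝ} {Z : Set (Fin d → ℝ)}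
    (hz : ∀ z ∈ Z, h z = 0) {x : Fin d → ℝ} (hx : x ∈ affineSpan ℝ Z) : h x = 0 := by
  refine affineSpan_induction (p := fun y => h y = 0) hx hz ?_
  intro c u v w hu hv hw
  have : h (c • (u -ᵥ v) +ᵥ w) = c • (h u -ᵥ h v) +ᵥ h w := by
    rw [AffineMap.map_vadd, ← AffineMap.linearMap_vsub, LinearMap.map_smul]
  simp only [vsub_eq_sub, vadd_eq_add] at this ⊢
  rw [this, hu, hv, hw]
  simp

lemma finrank_vectorSpan_insert {Z : Set (Fin d → ℝ)} {u : Fin d → ℝ}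
    (hZ : Z.Nonempty) (hu : u ∉ affineSpan ℝ Z) :
    Module.finrank ℝ (vectorSpan ℝ Z) + 1 ≤ Module.finrank ℝ (vectorSpan ℝ (insert u Z)) := by
  obtain ⟨z, hz⟩ := hZ
  have hlt : vectorSpan ℝ Z < vectorSpan ℝ (insert u Z) := by
    refine lt_of_le_of_ne (vectorSpan_mono ℝ (subset_insert u Z)) ?_
    intro heq
    apply hu
    have huz : u -ᵥ z ∈ vectorSpan ℝ (insert u Z) :=
      vsub_mem_vectorSpan ℝ (mem_insert u Z) (mem_insert_of_mem u hz)
    rw [← heq] at huz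
    have h2 : (u -ᵥ z) +ᵥ z ∈ affineSpan ℝ Z :=
      AffineSubspace.vadd_mem_of_mem_direction
        (by rw [direction_affineSpan]; exact huz) (subset_affineSpan ℝ Z hz)
    simpa using h2
  exact Nat.succ_le_of_lt (Submodule.finrank_lt_finrank_of_lt hlt)

/-- Core "rotation" construction: given `h₀ ≥ 0` on `V` and `h₁` which is negative somewhere
on `V` but only where `h₀ > 0`, there is `t > 0` with `h₀ + t h₁ ≥ 0` on `V` and vanishing at
some point of `V` where `h₀ > 0`. -/
lemma core {V : Set (Fin d → ℝ)} (hVfin : V.Finite)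
    (h₀ h₁ : (Fin d → ℝ) →ᵃ[ℝ] ℝ) (hnn : ∀ u ∈ V, 0 ≤ h₀ u)
    (hcomp : ∀ u ∈ V, h₁ u < 0 → 0 < h₀ u)
    (hT : ∃ u ∈ V, h₁ u < 0) :
    ∃ t : ℝ, 0 < t ∧ (∀ u ∈ V, 0 ≤ h₀ u + t * h₁ u) ∧
      ∃ u ∈ V, h₀ u + t * h₁ u = 0 ∧ 0 < h₀ u := by
  classical
  set T := hVfin.toFinset.filter (fun u => h₁ u < 0) with hTdef
  have hmemT : ∀ u, u ∈ T ↔ u ∈ V ∧ h₁ u < 0 := by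
    intro u; simp [hTdef, Finset.mem_filter, hVfin.mem_toFinset]
  have hTne : T.Nonempty := by
    obtain ⟨u, huV, hune⟩ := hT; exact ⟨u, (hmemT u).2 ⟨huV, hune⟩⟩
  obtain ⟨u₀, hu₀T, hu₀min⟩ := T.exists_min_image (fun u => h₀ u / (-h₁ u)) hTne
  obtain ⟨hu₀V, hu₀neg⟩ := (hmemT u₀).1 hu₀T
  have hqpos : ∀ u ∈ T, 0 < h₀ u / (-h₁ u) := by
    intro u huT
    obtain ⟨huV, hneg⟩ := (hmemT u).1 huT
    exact div_pos (hcomp u huV hneg) (by linarith)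
  have hcancel : ∀ u ∈ T, h₀ u + (h₀ u / (-h₁ u)) * h₁ u = 0 := by
    intro u huT
    obtain ⟨huV, hneg⟩ := (hmemT u).1 huT
    have hne : -h₁ u ≠ 0 := by linarith
    field_simp
    rw [div_self (by linarith : h₁ u ≠ 0)]; ring
  refine ⟨h₀ u₀ / (-h₁ u₀), hqpos u₀ hu₀T, ?_, u₀, hu₀V, hcancel u₀ hu₀T,
    hcomp u₀ hu₀V hu₀neg⟩
  intro u huV
  by_cases hneg : h₁ u < 0
  · have huT : u ∈ T := (hmemT u).2 ⟨huV, hneg⟩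
    have h1 : h₀ u₀ / (-h₁ u₀) ≤ h₀ u / (-h₁ u) := hu₀min u huT
    have h2 : (h₀ u / (-h₁ u)) * h₁ u ≤ (h₀ u₀ / (-h₁ u₀)) * h₁ u :=
      mul_le_mul_of_nonpos_right h1 (le_of_lt hneg)
    have := hcancel u huT
    linarith
  · push_neg at hneg
    have := hnn u huV
    have := hqpos u₀ hu₀T
    nlinarith

lemma exists_affine_vanishing {Z : Set (Fin d → ℝ)} {u₀ : Fin d → ℝ}
    (hz : Z.Nonempty) (hu : u₀ ∉ affineSpan ℝ Z) :
    ∃ h : (Fin d → ℝ) →ᵃ[ℝ] ℝ, (∀ x ∈ affineSpan ℝ Z, h x = 0) ∧ h u₀ = -1 := by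
  obtain ⟨z, hz⟩ := hz
  have hw : u₀ - z ∉ (affineSpan ℝ Z).direction := by
    intro hmem
    apply hu
    have h2 : (u₀ - z) +ᵥ z ∈ affineSpan ℝ Z :=
      AffineSubspace.vadd_mem_of_mem_direction hmem (subset_affineSpan ℝ Z hz)
    simpa using h2
  obtain ⟨f, hf0, hfbot⟩ :=
    Submodule.exists_dual_map_eq_bot_of_notMem hw inferInstance
  refine ⟨ofLinear ((-(f (u₀ - z))⁻¹) • f) z, ?_, ?_⟩
  · intro x hx
    have hxd : x - z ∈ (affineSpan ℝ Z).direction := by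
      have := AffineSubspace.vsub_mem_direction hx (subset_affineSpan ℝ Z hz)
      simpa using this
    have : f (x - z) = 0 := by
      have hmem : f (x - z) ∈ Submodule.map f (affineSpan ℝ Z).direction :=
        Submodule.mem_map_of_mem hxd
      rw [hfbot] at hmem
      simpa using hmem
    simp [ofLinear_apply, this]
  · simp only [ofLinear_apply, LinearMap.smul_apply, smul_eq_mul, neg_mul]
    rw [inv_mul_cancel₀ hf0]

/-- Certification: a nonneg affine functional on `V` whose zero set on `V` spans dimension
`d-1` exposes a facet of `P = conv V`. -/
lemma facet_cert {P V : Set (Fin d → ℝ)} (hPV : P = convexHull ℝ V)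
    (h : (Fin d → ℝ) →ᵃ[ℝ] ℝ) (hnn : ∀ u ∈ V, 0 ≤ h u)
    (hdim : d - 1 ≤ Module.finrank ℝ (vectorSpan ℝ {u ∈ V | h u = 0}))
    (hne : {u ∈ V | h u = 0}.Nonempty)
    (hpos : ∃ u ∈ V, 0 < h u) :
    (P ∩ {x | h x = 0}) ∈ ambientFacets P := by
  obtain ⟨z, hzV, hz0⟩ := hne
  obtain ⟨w, hwV, hw0⟩ := hpos
  have hVP : V ⊆ P := hPV ▸ subset_convexHull ℝ V
  have hnnP : ∀ x ∈ P, 0 ≤ h x := by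
    rw [hPV]; exact fun x hx => aff_nonneg_on_hull hnn hx
  have hdec : ∀ x y : Fin d → ℝ, h.linear (x - y) = h x - h y := by
    intro x y
    have := h.linearMap_vsub x y
    simpa using this
  have hlin : h.linear ≠ 0 := by
    intro h0
    have h1 := hdec w z
    rw [h0] at h1
    simp [hz0] at h1
    linarith
  have hexp : IsExposed ℝ P (P ∩ {x | h x = 0}) := by
    intro _
    refine ⟨-(LinearMap.toContinuousLinearMap h.linear), ?_⟩
    ext x
    simp only [mem_inter_iff, mem_setOf_eq, ContinuousLinearMap.neg_apply,
      LinearMap.coe_toContinuousLinearMap', neg_le_neg_iff]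
    constructor
    · rintro ⟨hxP, hx0⟩
      refine ⟨hxP, fun y hyP => ?_⟩
      have h2 : h.linear (y - x) = h y - h x := hdec y x
      have h3 : h.linear (y - x) = h.linear y - h.linear x := by simp [map_sub]
      have h4 := hnnP y hyP
      linarith
    · rintro ⟨hxP, hall⟩
      refine ⟨hxP, ?_⟩
      have h1 := hall z (hVP hzV)
      have h2 : h.linear (x - z) = h x - h z := hdec x z
      have h3 : h.linear x - h.linear z = h x - h z := by
        rw [← h2]; simp [map_sub]
      have h4 : h x ≤ h z := by linarith
      have h5 : 0 ≤ h x := hnnP x hxP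
      linarith [hz0]
  have hzP : z ∈ P := hVP hzV
  have hproper : P ∩ {x | h x = 0} ≠ P := by
    intro heq
    have hwmem : w ∈ P ∩ {x | h x = 0} := by rw [heq]; exact hVP hwV
    have : h w = 0 := hwmem.2
    linarith
  have hkerrank : Module.finrank ℝ (LinearMap.ker h.linear) = d - 1 := by
    have hsurj : LinearMap.range h.linear = ⊤ := by
      rw [LinearMap.range_eq_top]
      intro c
      obtain ⟨v, hv⟩ : ∃ v, h.linear v ≠ 0 := by
        by_contra hcon
        push_neg at hcon
        exact hlin (LinearMap.ext fun v => hcon v)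
      exact ⟨(c / h.linear v) • v, by simp [map_smul]; field_simp⟩
    have hrn := LinearMap.finrank_range_add_finrank_ker h.linear
    rw [hsurj, finrank_top] at hrn
    have hd : Module.finrank ℝ (Fin d → ℝ) = d := Module.finrank_fin_fun ℝ
    have h1 : Module.finrank ℝ ℝ = 1 := Module.finrank_self ℝ
    omega
  have hvsle : vectorSpan ℝ (P ∩ {x | h x = 0}) ≤ LinearMap.ker h.linear := by
    rw [vectorSpan_def, Submodule.span_le]
    rintro t ht
    obtain ⟨x, hx, y, hy, rfl⟩ := ht
    simp only [SetLike.mem_coe, LinearMap.mem_ker, vsub_eq_sub]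
    rw [hdec x y, hx.2, hy.2, sub_zero]
  have hdimle : polyDim (P ∩ {x | h x = 0}) ≤ d - 1 := by
    rw [polyDim, direction_affineSpan]
    calc Module.finrank ℝ (vectorSpan ℝ (P ∩ {x | h x = 0}))
        ≤ Module.finrank ℝ (LinearMap.ker h.linear) := Submodule.finrank_mono hvsle
      _ = d - 1 := hkerrank
  have hdimge : d - 1 ≤ polyDim (P ∩ {x | h x = 0}) := by
    rw [polyDim, direction_affineSpan]
    refine hdim.trans (Submodule.finrank_mono (vectorSpan_mono ℝ ?_))
    rintro u ⟨huV, hu0⟩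
    exact ⟨hVP huV, hu0⟩
  refine ⟨⟨hexp, ⟨z, hzP, hz0⟩, hproper⟩, ?_⟩
  rw [Module.finrank_fin_fun ℝ]
  omega

variable {P : Set (Fin d → ℝ)}

lemma polytope_hull_extreme (hP : IsPolytope P) :
    P = convexHull ℝ (P.extremePoints ℝ) ∧ (P.extremePoints ℝ).Finite := by
  obtain ⟨S, hSfin, rfl⟩ := hP
  have hVS : ((convexHull ℝ S).extremePoints ℝ) ⊆ S := extremePoints_convexHull_subset
  have hVfin := hSfin.subset hVS
  refine ⟨?_, hVfin⟩
  have hcomp : IsCompact (convexHull ℝ S) := hSfin.isCompact_convexHull ℝ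
  have hconv : Convex ℝ (convexHull ℝ S) := convex_convexHull ℝ S
  have h1 := closure_convexHull_extremePoints hcomp hconv
  rw [(hVfin.isClosed_convexHull ℝ).closure_eq] at h1
  exact h1.symm

lemma face_eq_hull (hP : IsPolytope P) {F : Set (Fin d → ℝ)} (hF : IsFaceOf P F) :
    F = convexHull ℝ (P.extremePoints ℝ ∩ F) := by
  obtain ⟨hPV, hVfin⟩ := polytope_hull_extreme hP
  obtain ⟨S, hSfin, hPS⟩ := hP
  have hPcomp : IsCompact P := hPS ▸ hSfin.isCompact_convexHull ℝ
  have hPconv : Convex ℝ P := hPS ▸ convex_convexHull ℝ S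
  have hFclosed : IsClosed F := hF.1.isClosed hPcomp.isClosed
  have hFcomp : IsCompact F := hPcomp.of_isClosed_subset hFclosed hF.1.subset
  have hFconv : Convex ℝ F := hF.1.convex hPconv
  have hsub : F.extremePoints ℝ ⊆ P.extremePoints ℝ ∩ F :=
    fun x hx => ⟨(hF.1.isExtreme).extremePoints_subset_extremePoints hx,
      extremePoints_subset hx⟩
  have h1 := closure_convexHull_extremePoints hFcomp hFconv
  have hfin2 : (P.extremePoints ℝ ∩ F).Finite := hVfin.subset inter_subset_left
  refine Subset.antisymm ?_ (convexHull_min inter_subset_right hFconv)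
  calc F = closure (convexHull ℝ (F.extremePoints ℝ)) := h1.symm
    _ ⊆ closure (convexHull ℝ (P.extremePoints ℝ ∩ F)) :=
        closure_mono (convexHull_mono hsub)
    _ = convexHull ℝ (P.extremePoints ℝ ∩ F) := (hfin2.isClosed_convexHull ℝ).closure_eq

lemma facets_finite (hP : IsPolytope P) : (ambientFacets P).Finite := by
  obtain ⟨_, hVfin⟩ := polytope_hull_extreme hP
  have hsub : ambientFacets P ⊆
      (fun T => convexHull ℝ T) '' {T | T ⊆ P.extremePoints ℝ} := by
    intro F hF
    exact ⟨P.extremePoints ℝ ∩ F, inter_subset_left, (face_eq_hull hP hF.1).symm⟩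
  exact ((hVfin.finite_subsets).image _).subset hsub

lemma facet_vertices (hP : IsPolytope P) (hd : 1 ≤ d)
    (hsimp : ∀ F ∈ ambientFacets P, (P.extremePoints ℝ ∩ F).ncard = d)
    {F : Set (Fin d → ℝ)} (hF : F ∈ ambientFacets P) :
    AffineIndependent ℝ (fun x => (x : Fin d → ℝ) :
        (P.extremePoints ℝ ∩ F : Set (Fin d → ℝ)) → (Fin d → ℝ)) ∧
      Module.finrank ℝ (vectorSpan ℝ (P.extremePoints ℝ ∩ F)) = d - 1 := by
  obtain ⟨hPV, hVfin⟩ := polytope_hull_extreme hP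
  set VF := P.extremePoints ℝ ∩ F with hVFdef
  have hVFfin : VF.Finite := hVfin.subset inter_subset_left
  have hspan : affineSpan ℝ VF = affineSpan ℝ F := by
    conv_rhs => rw [face_eq_hull hP hF.1]
    rw [affineSpan_convexHull]
  have hrank : Module.finrank ℝ (vectorSpan ℝ VF) = d - 1 := by
    have h1 : vectorSpan ℝ VF = (affineSpan ℝ F).direction := by
      rw [← direction_affineSpan, hspan]
    rw [h1]
    have := hF.2
    rwa [Module.finrank_fin_fun ℝ] at this
  refine ⟨?_, hrank⟩
  haveI : Fintype VF := hVFfin.fintype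
  have hcard : Fintype.card VF = (d - 1) + 1 := by
    have h1 : Fintype.card VF = VF.ncard := by
      rw [← Nat.card_coe_set_eq, Nat.card_eq_fintype_card]
    rw [h1, hsimp F hF]
    omega
  have := (affineIndependent_iff_finrank_vectorSpan_eq ℝ
    (fun x => (x : Fin d → ℝ) : VF → (Fin d → ℝ)) hcard).mpr
  apply this
  rwa [Subtype.range_coe]

lemma flip (hP : IsPolytope P) (hfull : affineSpan ℝ P = ⊤) (hd : 1 ≤ d)
    (hsimp : ∀ F ∈ ambientFacets P, (P.extremePoints ℝ ∩ F).ncard = d) :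
    ∀ F ∈ ambientFacets P, ∀ v ∈ P.extremePoints ℝ ∩ F,
    ∃ F', F' ∈ ambientFacets P ∧ v ∉ F' ∧ (P.extremePoints ℝ ∩ F) \ {v} ⊆ F' := by
  obtain ⟨hPV, hVfin⟩ := polytope_hull_extreme hP
  intro F hF v hv
  set V := P.extremePoints ℝ with hVdef
  set VF := V ∩ F with hVFdef
  set A := VF \ {v} with hAdef
  have hVP : V ⊆ P := hPV ▸ subset_convexHull ℝ V
  have hVFfin : VF.Finite := hVfin.subset inter_subset_left
  obtain ⟨hind, hrank⟩ := facet_vertices hP hd hsimp hF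
  -- the exposing functional of F
  obtain ⟨l, hl⟩ := hF.1.1 hF.1.2.1
  have hvF : v ∈ F := hv.2
  have hvmax : ∀ y ∈ P, l y ≤ l v := by
    rw [hl] at hvF; exact hvF.2
  set h₀ : (Fin d → ℝ) →ᵃ[ℝ] ℝ := ofLinear (-(l : (Fin d → ℝ) →ₗ[ℝ] ℝ)) v with hh₀def
  have hh₀ : ∀ x, h₀ x = l v - l x := by
    intro x; simp [hh₀def, ofLinear_apply, map_sub]; ring
  have hnn0 : ∀ u ∈ V, 0 ≤ h₀ u := by
    intro u hu; rw [hh₀]; linarith [hvmax u (hVP hu)]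
  have hnn0P : ∀ x ∈ P, 0 ≤ h₀ x := by
    intro x hx; rw [hh₀]; linarith [hvmax x hx]
  have hzero : ∀ x ∈ P, (h₀ x = 0 ↔ x ∈ F) := by
    intro x hx
    rw [hh₀, hl]
    constructor
    · intro hx0
      exact ⟨hx, fun y hy => by linarith [hvmax y hy]⟩
    · intro hxF
      have h1 := hxF.2 v (hVP hv.1)
      have h2 := hvmax x hx
      linarith
  have hVFchar : VF = {u ∈ V | h₀ u = 0} := by
    ext u
    constructor
    · rintro ⟨huV, huF⟩
      exact ⟨huV, (hzero u (hVP huV)).mpr huF⟩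
    · rintro ⟨huV, hu0⟩
      exact ⟨huV, (hzero u (hVP huV)).mp hu0⟩
  -- some vertex outside the affine span of VF
  have hVFne : VF.Nonempty := ⟨v, hv⟩
  obtain ⟨u₀, hu₀V, hu₀span⟩ : ∃ u₀ ∈ V, u₀ ∉ affineSpan ℝ VF := by
    by_contra hcon
    push_neg at hcon
    have htop : affineSpan ℝ VF = ⊤ := by
      refine eq_top_iff.mpr ?_
      have h1 : affineSpan ℝ V = ⊤ := by
        have := affineSpan_convexHull (𝕜 := ℝ) V
        rw [← hPV] at this
        rw [← this, hfull]
      rw [← h1]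
      exact affineSpan_le.mpr hcon
    have h2 : vectorSpan ℝ VF = ⊤ := by
      rw [← direction_affineSpan, htop, AffineSubspace.direction_top]
    rw [h2, finrank_top, Module.finrank_fin_fun ℝ] at hrank
    omega
  -- v is not in the affine span of A
  have hvA : v ∉ affineSpan ℝ A := by
    have h1 := hind.notMem_affineSpan_diff (⟨v, hv⟩ : VF) Set.univ
    have h2 : ((fun (x : VF) => (x : Fin d → ℝ)) ''
        ((Set.univ : Set VF) \ {(⟨v, hv⟩ : VF)})) = A := by
      apply Subset.antisymm
      · intro x hx
        rw [Set.mem_image] at hx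
        obtain ⟨y, hy, rfl⟩ := hx
        have hyne : y ≠ (⟨v, hv⟩ : VF) := fun h => hy.2 (mem_singleton_iff.mpr h)
        exact ⟨y.2, fun hxy => hyne (Subtype.ext (mem_singleton_iff.mp hxy))⟩
      · intro x hx
        rw [Set.mem_image]
        refine ⟨⟨x, hx.1⟩, ⟨trivial, fun hmem => ?_⟩, rfl⟩
        have h3 : (⟨x, hx.1⟩ : VF) = ⟨v, hv⟩ := mem_singleton_iff.mp hmem
        exact hx.2 (mem_singleton_iff.mpr (congrArg Subtype.val h3))
    rwa [h2] at h1
  -- g₁ vanishes on the span of VF and is -1 at u₀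
  obtain ⟨g₁, hg₁span, hg₁u₀⟩ := exists_affine_vanishing hVFne hu₀span
  -- g₂ vanishes on A and is 1 at v
  obtain ⟨g₂, hg₂A, hg₂v⟩ :
      ∃ g₂ : (Fin d → ℝ) →ᵃ[ℝ] ℝ, (∀ a ∈ A, g₂ a = 0) ∧ g₂ v = 1 := by
    rcases A.eq_empty_or_nonempty with hAe | hAne
    · exact ⟨AffineMap.const ℝ (Fin d → ℝ) (1:ℝ), by rw [hAe]; simp, rfl⟩
    · obtain ⟨g, hgspan, hgv⟩ := exists_affine_vanishing hAne hvA
      refine ⟨aCombo g g (-1) 0, ?_, ?_⟩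
      · intro a ha
        have := hgspan a (subset_affineSpan ℝ A ha)
        simp [aCombo_apply, this]
      · simp [aCombo_apply, hgv]
  -- h₁ := g₂ + c * g₁
  set c : ℝ := |g₂ u₀| + 1 with hcdef
  set h₁ : (Fin d → ℝ) →ᵃ[ℝ] ℝ := aCombo g₂ g₁ 1 c with hh₁def
  have hh₁A : ∀ a ∈ A, h₁ a = 0 := by
    intro a ha
    have h1 := hg₂A a ha
    have h2 := hg₁span a (subset_affineSpan ℝ VF ha.1)
    simp [hh₁def, aCombo_apply, h1, h2]
  have hh₁v : h₁ v = 1 := by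
    have h2 := hg₁span v (subset_affineSpan ℝ VF hv)
    simp [hh₁def, aCombo_apply, hg₂v, h2]
  have hh₁u₀ : h₁ u₀ < 0 := by
    have : h₁ u₀ = g₂ u₀ - c := by simp [hh₁def, aCombo_apply, hg₁u₀]; ring
    rw [this, hcdef]
    have := abs_nonneg (g₂ u₀)
    have := le_abs_self (g₂ u₀)
    linarith
  -- apply the core rotation
  have hcomp : ∀ u ∈ V, h₁ u < 0 → 0 < h₀ u := by
    intro u huV hneg
    rcases lt_or_eq_of_le (hnn0 u huV) with h | h
    · exact h
    · exfalso
      have huVF : u ∈ VF := by rw [hVFchar]; exact ⟨huV, h.symm⟩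
      rcases eq_or_ne u v with rfl | hne
      · rw [hh₁v] at hneg; linarith
      · have : u ∈ A := ⟨huVF, hne⟩
        rw [hh₁A u this] at hneg; linarith
  obtain ⟨t, htpos, hnnt, u₁, hu₁V, hu₁zero, hu₁pos⟩ :=
    core hVfin h₀ h₁ hnn0 hcomp ⟨u₀, hu₀V, hh₁u₀⟩
  set h : (Fin d → ℝ) →ᵃ[ℝ] ℝ := aCombo h₀ h₁ 1 t with hhdef
  have hhapp : ∀ x, h x = h₀ x + t * h₁ x := by
    intro x; simp [hhdef, aCombo_apply]
  have hnnh : ∀ u ∈ V, 0 ≤ h u := by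
    intro u hu; rw [hhapp]; exact hnnt u hu
  have hAzero : ∀ a ∈ A, h a = 0 := by
    intro a ha
    have h1 : h₀ a = 0 := by
      have h2 : a ∈ VF := ha.1
      rw [hVFchar] at h2
      exact h2.2
    rw [hhapp, h1, hh₁A a ha]
    ring
  have hvpos : 0 < h v := by
    have h1 : h₀ v = 0 := (hzero v (hVP hv.1)).mpr hvF
    rw [hhapp, h1, hh₁v]
    linarith
  have hu₁mem : u₁ ∈ {u ∈ V | h u = 0} := ⟨hu₁V, by rw [hhapp]; exact hu₁zero⟩
  -- dimension bound
  have hdim : d - 1 ≤ Module.finrank ℝ (vectorSpan ℝ {u ∈ V | h u = 0}) := by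
    rcases Nat.lt_or_ge d 2 with hd2 | hd2
    · have : d - 1 = 0 := by omega
      rw [this]; exact Nat.zero_le _
    · -- A is nonempty with d-1 elements and affinely independent
      have hAfin : A.Finite := hVFfin.subset diff_subset
      have hAcard : A.ncard = d - 1 := by
        rw [hAdef, Set.ncard_diff_singleton_of_mem hv, hsimp F hF]
      have hAne : A.Nonempty := by
        rw [← Set.ncard_pos hAfin, hAcard]; omega
      have hindA : AffineIndependent ℝ
          (fun x => (x : Fin d → ℝ) : A → (Fin d → ℝ)) :=
        hind.mono diff_subset
      haveI : Fintype A := hAfin.fintype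
      have hcardA : Fintype.card A = (d - 2) + 1 := by
        have h1 : Fintype.card A = A.ncard := by
          rw [← Nat.card_coe_set_eq, Nat.card_eq_fintype_card]
        rw [h1, hAcard]; omega
      have hrankA : Module.finrank ℝ (vectorSpan ℝ A) = d - 2 := by
        have := hindA.finrank_vectorSpan hcardA
        rwa [Subtype.range_coe] at this
      have hu₁A : u₁ ∉ affineSpan ℝ A := by
        intro hmem
        have hzeroA : ∀ a ∈ A, h₀ a = 0 := by
          intro a ha
          have h2 : a ∈ VF := ha.1
          rw [hVFchar] at h2
          exact h2.2
        have := aff_zero_on_affineSpan hzeroA hmem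
        linarith
      have hins := finrank_vectorSpan_insert hAne hu₁A
      rw [hrankA] at hins
      have hsub : insert u₁ A ⊆ {u ∈ V | h u = 0} := by
        rintro x (rfl | hxA)
        · exact hu₁mem
        · exact ⟨hxA.1.1, hAzero x hxA⟩
      calc d - 1 = (d - 2) + 1 := by omega
        _ ≤ Module.finrank ℝ (vectorSpan ℝ (insert u₁ A)) := hins
        _ ≤ Module.finrank ℝ (vectorSpan ℝ {u ∈ V | h u = 0}) :=
            Submodule.finrank_mono (vectorSpan_mono ℝ hsub)
  have hfacet := facet_cert hPV h hnnh hdim ⟨u₁, hu₁mem⟩ ⟨v, hv.1, hvpos⟩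
  refine ⟨P ∩ {x | h x = 0}, hfacet, ?_, ?_⟩
  · rintro ⟨-, hv0⟩
    simp only [mem_setOf_eq] at hv0
    linarith
  · intro a ha
    exact ⟨hVP ha.1.1, hAzero a ha⟩

lemma climb (hP : IsPolytope P) (hfull : affineSpan ℝ P = ⊤) :
    ∀ (m : ℕ) (h₀ : (Fin d → ℝ) →ᵃ[ℝ] ℝ),
      (∀ u ∈ P.extremePoints ℝ, 0 ≤ h₀ u) →
      {u ∈ P.extremePoints ℝ | h₀ u = 0}.Nonempty →
      (∃ u ∈ P.extremePoints ℝ, 0 < h₀ u) →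
      d - 1 ≤ m + Module.finrank ℝ (vectorSpan ℝ {u ∈ P.extremePoints ℝ | h₀ u = 0}) →
      ∃ F', F' ∈ ambientFacets P ∧ {u ∈ P.extremePoints ℝ | h₀ u = 0} ⊆ F' := by
  obtain ⟨hPV, hVfin⟩ := polytope_hull_extreme hP
  have hVP : P.extremePoints ℝ ⊆ P := extremePoints_subset
  intro m
  induction m with
  | zero =>
    intro h₀ hnn hne hpos hm
    refine ⟨_, facet_cert hPV h₀ hnn (by simpa using hm) hne hpos, ?_⟩
    rintro u ⟨huV, hu0⟩
    exact ⟨hVP huV, hu0⟩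
  | succ m ih =>
    intro h₀ hnn hne hpos hm
    by_cases hcase : d - 1 ≤ m +
        Module.finrank ℝ (vectorSpan ℝ {u ∈ P.extremePoints ℝ | h₀ u = 0})
    · exact ih h₀ hnn hne hpos hcase
    · push_neg at hcase
      set V := P.extremePoints ℝ with hVdef
      set Z := {u ∈ V | h₀ u = 0} with hZdef
      have hspanV : affineSpan ℝ V = ⊤ := by
        have := affineSpan_convexHull (𝕜 := ℝ) V
        rw [← hPV] at this
        rw [← this, hfull]
      obtain ⟨u₁, hu₁V, hu₁span⟩ : ∃ u₁ ∈ V, u₁ ∉ affineSpan ℝ Z := by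
        by_contra hcon
        push_neg at hcon
        have htop : affineSpan ℝ Z = ⊤ :=
          eq_top_iff.mpr (hspanV ▸ affineSpan_le.mpr hcon)
        have h2 : vectorSpan ℝ Z = ⊤ := by
          rw [← direction_affineSpan, htop, AffineSubspace.direction_top]
        rw [h2, finrank_top, Module.finrank_fin_fun ℝ] at hcase
        omega
      obtain ⟨u₀, hu₀V, hu₀N⟩ : ∃ u₀ ∈ V, u₀ ∉ affineSpan ℝ (insert u₁ Z) := by
        by_contra hcon
        push_neg at hcon
        have htop : affineSpan ℝ (insert u₁ Z) = ⊤ :=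
          eq_top_iff.mpr (hspanV ▸ affineSpan_le.mpr hcon)
        have h2 : vectorSpan ℝ (insert u₁ Z) = ⊤ := by
          rw [← direction_affineSpan, htop, AffineSubspace.direction_top]
        have h3 := finrank_vectorSpan_insert_le_set ℝ Z u₁
        rw [h2, finrank_top, Module.finrank_fin_fun ℝ] at h3
        omega
      obtain ⟨h₁, hh₁N, hh₁u₀⟩ :=
        exists_affine_vanishing (Set.insert_nonempty u₁ Z) hu₀N
      have hh₁Z : ∀ z ∈ Z, h₁ z = 0 := fun z hz =>
        hh₁N z (subset_affineSpan ℝ _ (mem_insert_of_mem u₁ hz))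
      have hh₁u₁ : h₁ u₁ = 0 := hh₁N u₁ (subset_affineSpan ℝ _ (mem_insert u₁ Z))
      have hcomp : ∀ u ∈ V, h₁ u < 0 → 0 < h₀ u := by
        intro u huV hneg
        rcases lt_or_eq_of_le (hnn u huV) with h | h
        · exact h
        · exfalso
          have huZ : u ∈ Z := ⟨huV, h.symm⟩
          rw [hh₁Z u huZ] at hneg
          linarith
      obtain ⟨t, htpos, hnnt, uu, huuV, huuzero, huupos⟩ :=
        core hVfin h₀ h₁ hnn hcomp ⟨u₀, hu₀V, by rw [hh₁u₀]; norm_num⟩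
      set h : (Fin d → ℝ) →ᵃ[ℝ] ℝ := aCombo h₀ h₁ 1 t with hhdef
      have hhapp : ∀ x, h x = h₀ x + t * h₁ x := by
        intro x; simp [hhdef, aCombo_apply]
      have hnnh : ∀ u ∈ V, 0 ≤ h u := by
        intro u hu; rw [hhapp]; exact hnnt u hu
      have hZsub : Z ⊆ {u ∈ V | h u = 0} := by
        rintro z ⟨hzV, hz0⟩
        refine ⟨hzV, ?_⟩
        rw [hhapp, hz0, hh₁Z z ⟨hzV, hz0⟩]
        ring
      have huumem : uu ∈ {u ∈ V | h u = 0} := ⟨huuV, by rw [hhapp]; exact huuzero⟩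
      have hu₁pos : 0 < h u₁ := by
        have h1 : h₀ u₁ ≠ 0 := by
          intro h0
          exact hu₁span (subset_affineSpan ℝ Z ⟨hu₁V, h0⟩)
        have h2 := hnn u₁ hu₁V
        rw [hhapp, hh₁u₁]
        rcases lt_or_eq_of_le h2 with h | h
        · linarith
        · exact absurd h.symm h1
      have huuspan : uu ∉ affineSpan ℝ Z := by
        intro hmem
        have hzeros : ∀ z ∈ Z, h₀ z = 0 := fun z hz => hz.2
        have := aff_zero_on_affineSpan hzeros hmem
        linarith
      obtain ⟨z₀, hz₀⟩ := hne
      have hins := finrank_vectorSpan_insert ⟨z₀, hz₀⟩ huuspan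
      have hsub2 : insert uu Z ⊆ {u ∈ V | h u = 0} := by
        rintro x (rfl | hxZ)
        · exact huumem
        · exact hZsub hxZ
      have hm' : d - 1 ≤ m + Module.finrank ℝ (vectorSpan ℝ {u ∈ V | h u = 0}) := by
        have h4 : Module.finrank ℝ (vectorSpan ℝ (insert uu Z)) ≤
            Module.finrank ℝ (vectorSpan ℝ {u ∈ V | h u = 0}) :=
          Submodule.finrank_mono (vectorSpan_mono ℝ hsub2)
        omega
      obtain ⟨F', hF', hZ'F'⟩ := ih h hnnh ⟨uu, huumem⟩ ⟨u₁, hu₁V, hu₁pos⟩ hm'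
      exact ⟨F', hF', fun z hz => hZ'F' (hZsub hz)⟩

lemma exists_facet_mem (hP : IsPolytope P) (hfull : affineSpan ℝ P = ⊤) (hd : 1 ≤ d)
    {v : Fin d → ℝ} (hv : v ∈ P.extremePoints ℝ) :
    ∃ F, F ∈ ambientFacets P ∧ v ∈ F := by
  obtain ⟨hPV, hVfin⟩ := polytope_hull_extreme hP
  set V := P.extremePoints ℝ with hVdef
  have hVP : V ⊆ P := extremePoints_subset
  have hPconv : Convex ℝ P := hPV ▸ convex_convexHull ℝ _
  have hVne : (V \ {v}).Nonempty := by
    rw [nonempty_iff_ne_empty]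
    intro hcon
    rw [diff_eq_empty] at hcon
    have hspanV : affineSpan ℝ V = ⊤ := by
      have := affineSpan_convexHull (𝕜 := ℝ) V
      rw [← hPV] at this
      rw [← this, hfull]
    have h1 : (⊤ : AffineSubspace ℝ (Fin d → ℝ)) ≤ affineSpan ℝ {v} := by
      rw [← hspanV]
      exact affineSpan_le.mpr (fun x hx => subset_affineSpan ℝ _ (hcon hx))
    have h2 : vectorSpan ℝ ({v} : Set (Fin d → ℝ)) = ⊤ := by
      rw [← direction_affineSpan, eq_top_iff.mpr h1, AffineSubspace.direction_top]
    rw [vectorSpan_singleton] at h2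
    have h3 : Module.finrank ℝ (⊥ : Submodule ℝ (Fin d → ℝ)) = 0 := finrank_bot ℝ _
    rw [h2, finrank_top, Module.finrank_fin_fun ℝ] at h3
    omega
  have hvK : v ∉ convexHull ℝ (V \ {v}) := by
    have h1 := (hPconv.mem_extremePoints_iff_mem_diff_convexHull_diff).mp hv
    intro hmem
    exact h1.2 (convexHull_mono (diff_subset_diff_left hVP) hmem)
  obtain ⟨l, u', hl1, hl2⟩ := geometric_hahn_banach_point_closed
    (convex_convexHull ℝ _) ((hVfin.subset diff_subset).isClosed_convexHull ℝ) hvK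
  set h₀ : (Fin d → ℝ) →ᵃ[ℝ] ℝ := ofLinear (l : (Fin d → ℝ) →ₗ[ℝ] ℝ) v with hh₀def
  have hh₀ : ∀ x, h₀ x = l x - l v := by
    intro x; simp [hh₀def, ofLinear_apply, map_sub]
  have hnn : ∀ u ∈ V, 0 ≤ h₀ u := by
    intro u hu
    rcases eq_or_ne u v with rfl | hne
    · rw [hh₀]; simp
    · have : u ∈ convexHull ℝ (V \ {v}) := subset_convexHull ℝ _ ⟨hu, hne⟩
      have := hl2 u this
      rw [hh₀]
      linarith
  have hne : {u ∈ V | h₀ u = 0}.Nonempty := ⟨v, hv, by rw [hh₀]; ring⟩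
  have hpos : ∃ u ∈ V, 0 < h₀ u := by
    obtain ⟨w, hwV, hwne⟩ := hVne
    refine ⟨w, hwV, ?_⟩
    have : w ∈ convexHull ℝ (V \ {v}) := subset_convexHull ℝ _ ⟨hwV, hwne⟩
    have := hl2 w this
    rw [hh₀]
    linarith
  obtain ⟨F, hF, hsub⟩ := climb hP hfull (d - 1) h₀ hnn hne hpos (by omega)
  exact ⟨F, hF, hsub ⟨hv, by rw [hh₀]; ring⟩⟩

lemma card_facets_ge (hP : IsPolytope P) (hfull : affineSpan ℝ P = ⊤) (hd : 1 ≤ d)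
    (hsimp : ∀ F ∈ ambientFacets P, (P.extremePoints ℝ ∩ F).ncard = d) :
    (P.extremePoints ℝ).ncard ≤ (ambientFacets P).ncard := by
  classical
  obtain ⟨hPV, hVfin⟩ := polytope_hull_extreme hP
  have hFfin : (ambientFacets P).Finite := facets_finite hP
  set Vfin := hVfin.toFinset with hVfindef
  set Ffin := hFfin.toFinset with hFfindef
  have hrow : ∀ F ∈ Ffin, (Vfin.filter (fun v => v ∈ F)).card = d := by
    intro F hF
    rw [hFfin.mem_toFinset] at hF
    have h1 : (P.extremePoints ℝ ∩ F) = ↑(Vfin.filter (fun v => v ∈ F)) := by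
      ext x
      simp [hVfindef, hVfin.mem_toFinset]
    have h2 := hsimp F hF
    rw [h1, Set.ncard_coe_finset] at h2
    exact h2
  have hcol : ∀ v ∈ Vfin, d ≤ (Ffin.filter (fun F => v ∈ F)).card := by
    intro v hvV
    rw [hVfin.mem_toFinset] at hvV
    obtain ⟨F₀, hF₀, hvF₀⟩ := exists_facet_mem hP hfull hd hvV
    have hflip := flip hP hfull hd hsimp F₀ hF₀
    set ψ : (Fin d → ℝ) → Set (Fin d → ℝ) := fun w =>
      if hw : w ∈ P.extremePoints ℝ ∩ F₀ ∧ w ≠ v then (hflip w hw.1).choose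
      else F₀ with hψdef
    have hψspec : ∀ w (hw : w ∈ P.extremePoints ℝ ∩ F₀) (hne : w ≠ v),
        ψ w ∈ ambientFacets P ∧ w ∉ ψ w ∧
          (P.extremePoints ℝ ∩ F₀) \ {w} ⊆ ψ w := by
      intro w hw hne
      have heq : ψ w = (hflip w hw).choose := dif_pos ⟨hw, hne⟩
      rw [heq]
      exact (hflip w hw).choose_spec
    have hψv : ψ v = F₀ := by
      apply dif_neg
      rintro ⟨-, hne⟩
      exact hne rfl
    calc d = (Vfin.filter (fun w => w ∈ F₀)).card :=
          (hrow F₀ (hFfin.mem_toFinset.mpr hF₀)).symm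
      _ ≤ (Ffin.filter (fun F => v ∈ F)).card := ?_
    refine Finset.card_le_card_of_injOn ψ ?_ ?_
    · intro w hw
      rw [Finset.mem_coe, Finset.mem_filter, hVfin.mem_toFinset] at hw
      have hwmem : w ∈ P.extremePoints ℝ ∩ F₀ := ⟨hw.1, hw.2⟩
      rcases eq_or_ne w v with rfl | hne
      · rw [Finset.mem_coe, Finset.mem_filter, hψv]
        exact ⟨hFfin.mem_toFinset.mpr hF₀, hvF₀⟩
      · obtain ⟨hmem, hnotin, hsub⟩ := hψspec w hwmem hne
        rw [Finset.mem_coe, Finset.mem_filter]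
        exact ⟨hFfin.mem_toFinset.mpr hmem, hsub ⟨⟨hvV, hvF₀⟩, fun h =>
          hne (mem_singleton_iff.mp h).symm⟩⟩
    · intro w₁ hw₁ w₂ hw₂ heq
      simp only [Finset.coe_filter, mem_setOf_eq, hVfindef, hVfin.mem_toFinset] at hw₁ hw₂
      have hw₁mem : w₁ ∈ P.extremePoints ℝ ∩ F₀ := ⟨hw₁.1, hw₁.2⟩
      have hw₂mem : w₂ ∈ P.extremePoints ℝ ∩ F₀ := ⟨hw₂.1, hw₂.2⟩
      by_contra hne12
      rcases eq_or_ne w₁ v with rfl | hne₁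
      · obtain ⟨-, hnotin₂, -⟩ := hψspec w₂ hw₂mem (fun h => hne12 h.symm)
        rw [hψv] at heq
        exact hnotin₂ (heq ▸ hw₂.2)
      · obtain ⟨-, hnotin₁, hsub₁⟩ := hψspec w₁ hw₁mem hne₁
        rcases eq_or_ne w₂ v with rfl | hne₂
        · rw [hψv] at heq
          exact hnotin₁ (heq.symm ▸ hw₁.2)
        · obtain ⟨-, hnotin₂, -⟩ := hψspec w₂ hw₂mem hne₂
          apply hnotin₂
          rw [← heq]
          exact hsub₁ ⟨hw₂mem, fun h => hne12 ((mem_singleton_iff.mp h).symm)⟩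
  have hswap : ∑ F ∈ Ffin, (Vfin.filter (fun v => v ∈ F)).card
      = ∑ v ∈ Vfin, (Ffin.filter (fun F => v ∈ F)).card := by
    simp only [Finset.card_filter]
    rw [Finset.sum_comm]
  have h1 : ∑ F ∈ Ffin, (Vfin.filter (fun v => v ∈ F)).card = Ffin.card * d := by
    rw [Finset.sum_congr rfl hrow, Finset.sum_const, nsmul_eq_mul, Nat.cast_id]
  have h2 : Vfin.card * d ≤ ∑ v ∈ Vfin, (Ffin.filter (fun F => v ∈ F)).card := by
    calc Vfin.card * d = Vfin.card • d := by rw [nsmul_eq_mul, Nat.cast_id]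
      _ ≤ ∑ v ∈ Vfin, (Ffin.filter (fun F => v ∈ F)).card :=
          Finset.card_nsmul_le_sum Vfin _ d hcol
  have h3 : Vfin.card ≤ Ffin.card := by
    have h4 : Vfin.card * d ≤ Ffin.card * d := by omega
    exact Nat.le_of_mul_le_mul_right h4 hd
  have hV : (P.extremePoints ℝ).ncard = Vfin.card := by
    rw [← hVfin.coe_toFinset, Set.ncard_coe_finset]
  have hF : (ambientFacets P).ncard = Ffin.card := by
    rw [← hFfin.coe_toFinset, Set.ncard_coe_finset]
  rw [hV, hF]
  exact h3

end VFAAux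

/-- Every simplicial full-dimensional polytope (every facet contains
exactly `d` vertices of `P`) has a vertex-facet assignment. -/
theorem vfa_of_simplicial {d : ℕ} (P : Set (Fin d → ℝ))
    (hP : IsPolytope P) (hfull : affineSpan ℝ P = ⊤)
    (hsimplicial : ∀ F ∈ ambientFacets P, (P.extremePoints ℝ ∩ F).ncard = d) :
    HasVFA P := by
  classical
  rcases Nat.eq_zero_or_pos d with hd0 | hdpos
  · -- dimension 0 : there are no facets at all
    subst hd0
    right
    have hempty : ∀ F, F ∉ ambientFacets P := by
      intro F hF
      obtain ⟨x, hxF⟩ := hF.1.2.1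
      apply hF.1.2.2
      apply Subset.antisymm hF.1.1.subset
      intro y hyP
      have hyx : y = x := funext fun i => i.elim0
      rw [hyx]
      exact hxF
    exact ⟨fun F => absurd F.2 (hempty F.1),
      fun a b _ => absurd a.2 (hempty a.1),
      fun F => absurd F.2 (hempty F.1)⟩
  · left
    obtain ⟨hPV, hVfin⟩ := VFAAux.polytope_hull_extreme hP
    have hFfin := VFAAux.facets_finite hP
    set Ffin := hFfin.toFinset with hFfindef
    have hflip := VFAAux.flip hP hfull hdpos hsimplicial
    haveI : Fintype (P.extremePoints ℝ) := hVfin.fintype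
    set t : (P.extremePoints ℝ) → Finset (Set (Fin d → ℝ)) :=
      fun v => Ffin.filter (fun F => (v : Fin d → ℝ) ∉ F) with htdef
    have hall : ∀ s : Finset (P.extremePoints ℝ), s.card ≤ (s.biUnion t).card := by
      intro s
      by_cases hcase : ∃ F ∈ ambientFacets P, ∀ v ∈ s, (v : Fin d → ℝ) ∈ F
      · obtain ⟨F₀, hF₀, hall0⟩ := hcase
        set ψ : (P.extremePoints ℝ) → Set (Fin d → ℝ) := fun v =>
          if hw : (v : Fin d → ℝ) ∈ P.extremePoints ℝ ∩ F₀ then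
            (hflip F₀ hF₀ (v : Fin d → ℝ) hw).choose else ∅ with hψdef
        have hψspec : ∀ (v : (P.extremePoints ℝ))
            (hw : (v : Fin d → ℝ) ∈ P.extremePoints ℝ ∩ F₀),
            ψ v ∈ ambientFacets P ∧ (v : Fin d → ℝ) ∉ ψ v ∧
              (P.extremePoints ℝ ∩ F₀) \ {(v : Fin d → ℝ)} ⊆ ψ v := by
          intro v hw
          have heq : ψ v = (hflip F₀ hF₀ (v : Fin d → ℝ) hw).choose := dif_pos hw
          rw [heq]
          exact (hflip F₀ hF₀ (v : Fin d → ℝ) hw).choose_spec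
        refine Finset.card_le_card_of_injOn ψ ?_ ?_
        · intro v hvs
          have hvmem : (v : Fin d → ℝ) ∈ P.extremePoints ℝ ∩ F₀ := ⟨v.2, hall0 v hvs⟩
          obtain ⟨hmem, hnotin, -⟩ := hψspec v hvmem
          rw [Finset.mem_coe, Finset.mem_biUnion]
          exact ⟨v, hvs, Finset.mem_filter.mpr ⟨hFfin.mem_toFinset.mpr hmem, hnotin⟩⟩
        · intro v₁ hv₁ v₂ hv₂ heq
          by_contra hne
          have hvne : (v₁ : Fin d → ℝ) ≠ (v₂ : Fin d → ℝ) :=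
            fun h => hne (Subtype.ext h)
          have hv₁mem : (v₁ : Fin d → ℝ) ∈ P.extremePoints ℝ ∩ F₀ := ⟨v₁.2, hall0 v₁ hv₁⟩
          have hv₂mem : (v₂ : Fin d → ℝ) ∈ P.extremePoints ℝ ∩ F₀ := ⟨v₂.2, hall0 v₂ hv₂⟩
          obtain ⟨-, -, hsub₁⟩ := hψspec v₁ hv₁mem
          obtain ⟨-, hnotin₂, -⟩ := hψspec v₂ hv₂mem
          apply hnotin₂
          rw [← heq]
          exact hsub₁ ⟨hv₂mem, fun h => hvne ((mem_singleton_iff.mp h).symm)⟩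
      · push_neg at hcase
        have hbig : s.biUnion t = Ffin := by
          apply Finset.Subset.antisymm
          · intro F hF
            rw [Finset.mem_biUnion] at hF
            obtain ⟨v, -, hvF⟩ := hF
            exact (Finset.mem_filter.mp hvF).1
          · intro F hF
            obtain ⟨v, hvs, hvnot⟩ := hcase F (hFfin.mem_toFinset.mp hF)
            rw [Finset.mem_biUnion]
            exact ⟨v, hvs, Finset.mem_filter.mpr ⟨hF, hvnot⟩⟩
        rw [hbig]
        calc s.card ≤ Fintype.card (P.extremePoints ℝ) := Finset.card_le_univ s
          _ = (P.extremePoints ℝ).ncard := by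
              rw [← Nat.card_coe_set_eq, Nat.card_eq_fintype_card]
          _ ≤ (ambientFacets P).ncard :=
              VFAAux.card_facets_ge hP hfull hdpos hsimplicial
          _ = Ffin.card := by rw [← hFfin.coe_toFinset, Set.ncard_coe_finset]
    obtain ⟨f', hinj, hmem⟩ :=
      (Finset.all_card_le_biUnion_card_iff_exists_injective t).mp hall
    refine ⟨fun v => ⟨f' v, hFfin.mem_toFinset.mp (Finset.mem_filter.mp (hmem v)).1⟩,
      ?_, ?_⟩
    · intro a b hab
      apply hinj
      exact congrArg Subtype.val hab
    · intro v
      exact (Finset.mem_filter.mp (hmem v)).2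
end

section
/- Every simple full-dimensional polytope P ⊆ ℝ^d (i.e., every vertex of P is contained in exactly d facets of P) has a vertex-facet assignment. -/
set_option linter.unusedSectionVars false
set_option linter.unusedVariables false
set_option maxHeartbeats 1000000

namespace VFAAux

open Module Set

variable {E : Type*} [NormedAddCommGroup E] [NormedSpace ℝ E] [FiniteDimensional ℝ E]
variable {P : Set E}


theorem poly_compact (hP : IsPolytope P) : IsCompact P := by
  obtain ⟨S, hS, rfl⟩ := hP
  exact hS.isCompact_convexHull ℝ

theorem poly_convex (hP : IsPolytope P) : Convex ℝ P := by
  obtain ⟨S, hS, rfl⟩ := hP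
  exact convex_convexHull ℝ S

theorem poly_ext_finite (hP : IsPolytope P) : (P.extremePoints ℝ).Finite := by
  obtain ⟨S, hS, rfl⟩ := hP
  exact hS.subset extremePoints_convexHull_subset

theorem poly_hull_ext (hP : IsPolytope P) : P = convexHull ℝ (P.extremePoints ℝ) := by
  have h := closure_convexHull_extremePoints (poly_compact hP) (poly_convex hP)
  rw [((poly_ext_finite hP).isClosed_convexHull ℝ).closure_eq] at h
  exact h.symm

theorem face_ext (hPc : IsCompact P) {F : Set E}
    (hF : IsExposed ℝ P F) :
    F.extremePoints ℝ = P.extremePoints ℝ ∩ F := by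
  rw [hF.isExtreme.extremePoints_eq]; exact Set.inter_comm _ _

theorem face_hull (hPc : IsCompact P) (hconv : Convex ℝ P)
    (hfin : (P.extremePoints ℝ).Finite) {F : Set E} (hF : IsExposed ℝ P F) :
    F = convexHull ℝ (P.extremePoints ℝ ∩ F) := by
  have hFc : IsClosed F := hF.isClosed hPc.isClosed
  have hcomp : IsCompact F := hPc.of_isClosed_subset hFc hF.subset
  have h := closure_convexHull_extremePoints hcomp (hF.convex hconv)
  rw [face_ext hPc hF] at h
  rw [((hfin.subset Set.inter_subset_left).isClosed_convexHull ℝ).closure_eq] at h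
  exact h.symm

theorem exposer (hfull : affineSpan ℝ P = ⊤) {F : Set E} (hF : IsExposed ℝ P F)
    (hne : F.Nonempty) (hproper : F ≠ P) :
    ∃ l : E →L[ℝ] ℝ, F = {x ∈ P | ∀ y ∈ P, l y ≤ l x} ∧ l ≠ 0 ∧
      ∀ v ∈ vectorSpan ℝ F, l v = 0 := by
  obtain ⟨l, hl⟩ := hF hne
  refine ⟨l, hl, ?_, ?_⟩
  · rintro rfl
    apply hproper
    rw [hl]
    ext x; simp
  · have hconst : ∀ x ∈ F, ∀ y ∈ F, l x = l y := by
      intro x hx y hy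
      rw [hl] at hx hy
      exact le_antisymm (hy.2 x hx.1) (hx.2 y hy.1)
    intro v hv
    rw [vectorSpan_def] at hv
    have hsub : (F -ᵥ F : Set E) ⊆ (LinearMap.ker (l : E →ₗ[ℝ] ℝ) : Set E) := by
      rintro u ⟨x, hx, y, hy, rfl⟩
      simp only [SetLike.mem_coe, LinearMap.mem_ker, ContinuousLinearMap.coe_coe,
        vsub_eq_sub, map_sub]
      rw [hconst x hx y hy, sub_self]
    have := (Submodule.span_le.2 hsub) hv
    simpa using this

theorem ker_rank {l : E →L[ℝ] ℝ} (hl : l ≠ 0) :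
    finrank ℝ (LinearMap.ker (l : E →ₗ[ℝ] ℝ)) + 1 = finrank ℝ E := by
  obtain ⟨x, hx⟩ : ∃ x, l x ≠ 0 := by
    by_contra h
    push_neg at h
    exact hl (by ext y; simp [h y])
  have hsurj : Function.Surjective (l : E →ₗ[ℝ] ℝ) := by
    intro r
    refine ⟨(r / l x) • x, ?_⟩
    simp [div_mul_eq_mul_div]
    field_simp
  have h := LinearMap.finrank_range_add_finrank_ker (l : E →ₗ[ℝ] ℝ)
  rw [LinearMap.range_eq_top.2 hsurj, finrank_top] at h
  simp [Module.finrank_self] at h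
  omega

theorem polyDim_le_sub_one (hfull : affineSpan ℝ P = ⊤) {F : Set E} (hF : IsExposed ℝ P F)
    (hne : F.Nonempty) (hproper : F ≠ P) : polyDim F + 1 ≤ finrank ℝ E := by
  obtain ⟨l, hl, hl0, hker⟩ := exposer hfull hF hne hproper
  have hle : vectorSpan ℝ F ≤ LinearMap.ker (l : E →ₗ[ℝ] ℝ) := by
    intro v hv
    simpa using hker v hv
  have h1 := ker_rank hl0
  have h2 : polyDim F ≤ finrank ℝ (LinearMap.ker (l : E →ₗ[ℝ] ℝ)) := by
    rw [polyDim, direction_affineSpan]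
    exact Submodule.finrank_mono hle
  omega

theorem enlarge (hPc : IsCompact P) (hconv : Convex ℝ P)
    (hfin : (P.extremePoints ℝ).Finite) (hhull : P = convexHull ℝ (P.extremePoints ℝ))
    (hfull : affineSpan ℝ P = ⊤)
    {F : Set E} (hF : IsExposed ℝ P F) (hne : F.Nonempty) (hproper : F ≠ P)
    (hdim : polyDim F + 1 < finrank ℝ E) :
    ∃ F' : Set E, IsExposed ℝ P F' ∧ F'.Nonempty ∧ F' ≠ P ∧ F ⊆ F' ∧ polyDim F < polyDim F' := by
  classical
  obtain ⟨w₀, hw₀⟩ := hne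
  obtain ⟨l, hlF, hl0, hlker⟩ := exposer hfull hF ⟨w₀, hw₀⟩ hproper
  have hVP : P.extremePoints ℝ ⊆ P := extremePoints_subset
  have htop : vectorSpan ℝ P = ⊤ := by
    rw [← direction_affineSpan, hfull, AffineSubspace.direction_top]
  have hVtop : vectorSpan ℝ (P.extremePoints ℝ) = ⊤ := by
    have h5 : affineSpan ℝ (P.extremePoints ℝ) = ⊤ := by
      rw [← affineSpan_convexHull, ← hhull, hfull]
    rw [← direction_affineSpan, h5, AffineSubspace.direction_top]
  have key : ∀ η : E →L[ℝ] ℝ, (∀ v ∈ vectorSpan ℝ F, η v = 0) →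
      (∀ r : ℝ, ∃ x, r * l x ≠ η x) → (∃ v ∈ P.extremePoints ℝ, η w₀ < η v) →
      ∃ F' : Set E, IsExposed ℝ P F' ∧ F'.Nonempty ∧ F' ≠ P ∧ F ⊆ F' ∧
        polyDim F < polyDim F' := by
    rintro η hηker hηns ⟨v₁, hv₁V, hv₁⟩
    have hlmax : ∀ y ∈ P, l y ≤ l w₀ := by
      have h6 : w₀ ∈ {x ∈ P | ∀ y ∈ P, l y ≤ l x} := hlF ▸ hw₀
      exact h6.2
    have hmemF : ∀ x ∈ P, l x = l w₀ → x ∈ F := by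
      intro x hx hxl
      rw [hlF]
      exact ⟨hx, fun y hy => (hlmax y hy).trans hxl.ge⟩
    have hlconst : ∀ x ∈ F, l x = l w₀ := by
      intro x hx
      have h1 : (x -ᵥ w₀ : E) ∈ vectorSpan ℝ F := vsub_mem_vectorSpan ℝ hx hw₀
      rw [vsub_eq_sub] at h1
      have h2 := hlker _ h1
      rw [map_sub, sub_eq_zero] at h2
      exact h2
    have hηconst : ∀ x ∈ F, η x = η w₀ := by
      intro x hx
      have h1 : (x -ᵥ w₀ : E) ∈ vectorSpan ℝ F := vsub_mem_vectorSpan ℝ hx hw₀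
      rw [vsub_eq_sub] at h1
      have h2 := hηker _ h1
      rw [map_sub, sub_eq_zero] at h2
      exact h2
    set T : Finset E := hfin.toFinset.filter (fun v => η w₀ < η v) with hT
    have hmemT : ∀ v, v ∈ T ↔ v ∈ P.extremePoints ℝ ∧ η w₀ < η v := by
      intro v
      simp [hT, hfin.mem_toFinset]
    have hv₁T : v₁ ∈ T := (hmemT v₁).2 ⟨hv₁V, hv₁⟩
    have hTlt : ∀ v ∈ T, l v < l w₀ := by
      intro v hv
      rw [hmemT] at hv
      rcases lt_or_eq_of_le (hlmax v (hVP hv.1)) with h | h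
      · exact h
      · exact absurd (hηconst v (hmemF v (hVP hv.1) h)) (ne_of_gt hv.2)
    set r : E → ℝ := fun v => (l w₀ - l v) / (η v - η w₀) with hr
    obtain ⟨v', hv'T, hv'min⟩ := T.exists_min_image r ⟨v₁, hv₁T⟩
    have hv'V : v' ∈ P.extremePoints ℝ := ((hmemT v').1 hv'T).1
    have hv'gt : η w₀ < η v' := ((hmemT v').1 hv'T).2
    set t : ℝ := r v' with ht
    have ht0 : 0 < t := div_pos (sub_pos.2 (hTlt v' hv'T)) (sub_pos.2 hv'gt)
    set ψ : E →L[ℝ] ℝ := l + t • η with hψ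
    have hψapp : ∀ x, ψ x = l x + t * η x := by
      intro x; rw [hψ]; simp
    set M : ℝ := l w₀ + t * η w₀ with hM
    have hψle : ∀ u ∈ P.extremePoints ℝ, ψ u ≤ M := by
      intro u huV
      rw [hψapp]
      by_cases hc : η w₀ < η u
      · have huT : u ∈ T := (hmemT u).2 ⟨huV, hc⟩
        have hmin := hv'min u huT
        have hpos : 0 < η u - η w₀ := sub_pos.2 hc
        have h2 : t * (η u - η w₀) ≤ l w₀ - l u := by
          have h3 : t ≤ (l w₀ - l u) / (η u - η w₀) := hmin
          calc t * (η u - η w₀) ≤ ((l w₀ - l u) / (η u - η w₀)) * (η u - η w₀) := by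
                exact mul_le_mul_of_nonneg_right h3 hpos.le
            _ = l w₀ - l u := div_mul_cancel₀ _ (ne_of_gt hpos)
        nlinarith [h2]
      · push_neg at hc
        have h1 : l u ≤ l w₀ := hlmax u (hVP huV)
        nlinarith [mul_le_mul_of_nonneg_left hc ht0.le]
    have hψP : ∀ x ∈ P, ψ x ≤ M := by
      intro x hx
      have hsub2 : convexHull ℝ (P.extremePoints ℝ) ⊆ {x : E | ψ x ≤ M} := by
        apply convexHull_min _ (convex_halfSpace_le ⟨ψ.map_add, ψ.map_smul⟩ M)
        intro u hu
        exact hψle u hu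
      exact hsub2 (hhull ▸ hx)
    have hψv' : ψ v' = M := by
      have hpos : 0 < η v' - η w₀ := sub_pos.2 hv'gt
      have h4 : t * (η v' - η w₀) = l w₀ - l v' := by
        rw [ht, hr]
        exact div_mul_cancel₀ _ (ne_of_gt hpos)
      rw [hψapp, hM]
      nlinarith [h4]
    set F' : Set E := {x ∈ P | ∀ y ∈ P, ψ y ≤ ψ x} with hF'
    have hexp' : IsExposed ℝ P F' := fun _ => ⟨ψ, hF'⟩
    have hMw : ∀ x ∈ F, ψ x = M := by
      intro x hx
      rw [hψapp, hlconst x hx, hηconst x hx, hM]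
    have hFsub : F ⊆ F' := by
      intro x hx
      exact ⟨hF.subset hx, fun y hy => (hψP y hy).trans (hMw x hx).ge⟩
    have hv'F' : v' ∈ F' := ⟨hVP hv'V, fun y hy => (hψP y hy).trans hψv'.ge⟩
    have hproper' : F' ≠ P := by
      intro hEq
      have hconstψ : ∀ x ∈ P, ψ x = ψ w₀ := by
        intro x hx
        have hx' : x ∈ F' := hEq ▸ hx
        have hw' : w₀ ∈ F' := hFsub hw₀
        exact le_antisymm (hw'.2 x hx) (hx'.2 w₀ (hF.subset hw₀))
      have hψ0 : ∀ x : E, ψ x = 0 := by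
        have hker2 : vectorSpan ℝ P ≤ LinearMap.ker (ψ : E →ₗ[ℝ] ℝ) := by
          rw [vectorSpan_def, Submodule.span_le]
          rintro u ⟨a, ha, b, hb, rfl⟩
          simp only [SetLike.mem_coe, LinearMap.mem_ker, ContinuousLinearMap.coe_coe,
            vsub_eq_sub, map_sub]
          rw [hconstψ a ha, hconstψ b hb, sub_self]
        rw [htop] at hker2
        intro x
        have hx : x ∈ LinearMap.ker (ψ : E →ₗ[ℝ] ℝ) := hker2 Submodule.mem_top
        simpa using hx
      obtain ⟨x, hx⟩ := hηns (-t⁻¹)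
      apply hx
      have h7 := hψ0 x
      rw [hψapp x] at h7
      have ht0' : t ≠ 0 := ne_of_gt ht0
      field_simp
      linarith
    have hlt : polyDim F < polyDim F' := by
      have hle2 : vectorSpan ℝ F ≤ vectorSpan ℝ F' := vectorSpan_mono ℝ hFsub
      have hmem2 : (v' -ᵥ w₀ : E) ∈ vectorSpan ℝ F' := vsub_mem_vectorSpan ℝ hv'F' (hFsub hw₀)
      have hnmem : (v' -ᵥ w₀ : E) ∉ vectorSpan ℝ F := by
        intro hmem
        have h8 := hηker _ hmem
        rw [vsub_eq_sub, map_sub, sub_eq_zero] at h8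
        exact absurd h8 (ne_of_gt hv'gt)
      have hstrict : vectorSpan ℝ F < vectorSpan ℝ F' :=
        lt_of_le_of_ne hle2 (fun h => hnmem (by rw [h]; exact hmem2))
      rw [polyDim, polyDim, direction_affineSpan, direction_affineSpan]
      exact Submodule.finrank_lt_finrank_of_lt hstrict
    exact ⟨F', hexp', ⟨w₀, hFsub hw₀⟩, hproper', hFsub, hlt⟩
  -- construct η
  set U : Submodule ℝ E := vectorSpan ℝ F with hU
  have hUdim : finrank ℝ U + 1 < finrank ℝ E := by
    rw [polyDim, direction_affineSpan] at hdim; exact hdim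
  have hannrank : finrank ℝ (U.dualAnnihilator) + finrank ℝ U = finrank ℝ E := by
    have h1 := (Subspace.quotEquivAnnihilator U).finrank_eq
    have h2 := Submodule.finrank_quotient_add_finrank U
    omega
  have hlann : (l : E →ₗ[ℝ] ℝ) ∈ U.dualAnnihilator := by
    rw [Submodule.mem_dualAnnihilator]
    intro w hw
    simpa using hlker w hw
  obtain ⟨η₀, hη₀ann, hη₀span⟩ :
      ∃ η₀ ∈ U.dualAnnihilator, η₀ ∉ Submodule.span ℝ {(l : E →ₗ[ℝ] ℝ)} := by
    by_contra h
    push_neg at h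
    have hle3 : U.dualAnnihilator ≤ Submodule.span ℝ {(l : E →ₗ[ℝ] ℝ)} := h
    have h4 : finrank ℝ (U.dualAnnihilator) ≤ 1 := by
      refine (Submodule.finrank_mono hle3).trans ?_
      by_cases hl' : (l : E →ₗ[ℝ] ℝ) = 0
      · rw [hl', Submodule.span_zero_singleton]
        simp
      · rw [finrank_span_singleton hl']
    omega
  set η₀c : E →L[ℝ] ℝ := LinearMap.toContinuousLinearMap η₀ with hη₀c
  have hη₀app : ∀ x, η₀c x = η₀ x := fun x => rfl
  have hηker0 : ∀ v ∈ vectorSpan ℝ F, η₀c v = 0 := by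
    intro v hv
    rw [hη₀app]
    exact (Submodule.mem_dualAnnihilator η₀).1 hη₀ann v hv
  have hηns0 : ∀ r : ℝ, ∃ x, r * l x ≠ η₀c x := by
    intro r
    by_contra h
    push_neg at h
    apply hη₀span
    rw [Submodule.mem_span_singleton]
    refine ⟨r, ?_⟩
    ext x
    have h9 := h x
    rw [hη₀app] at h9
    simpa using h9
  have hnc : ∃ v ∈ P.extremePoints ℝ, η₀c v ≠ η₀c w₀ := by
    by_contra h
    push_neg at h
    apply hη₀span
    have hη₀0 : η₀ = 0 := by
      have hker5 : vectorSpan ℝ (P.extremePoints ℝ) ≤ LinearMap.ker η₀ := by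
        rw [vectorSpan_def, Submodule.span_le]
        rintro u ⟨a, ha, b, hb, rfl⟩
        simp only [SetLike.mem_coe, LinearMap.mem_ker, vsub_eq_sub, map_sub]
        have ha' := h a ha
        have hb' := h b hb
        rw [hη₀app, hη₀app] at ha' hb'
        rw [ha', hb', sub_self]
      rw [hVtop] at hker5
      ext x
      have hx : x ∈ LinearMap.ker η₀ := hker5 Submodule.mem_top
      simpa using hx
    rw [hη₀0]
    exact Submodule.zero_mem _
  rcases hnc with ⟨v₂, hv₂V, hv₂⟩
  rcases lt_or_gt_of_ne hv₂ with hlt2 | hgt2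
  · apply key (-η₀c)
    · intro v hv
      simp [hηker0 v hv]
    · intro rr
      obtain ⟨x, hx⟩ := hηns0 (-rr)
      refine ⟨x, fun hEq => hx ?_⟩
      simp only [ContinuousLinearMap.neg_apply] at hEq
      linarith
    · refine ⟨v₂, hv₂V, ?_⟩
      simp only [ContinuousLinearMap.neg_apply]
      linarith
  · exact key η₀c hηker0 hηns0 ⟨v₂, hv₂V, hgt2⟩

theorem subset_facet (hPc : IsCompact P) (hconv : Convex ℝ P)
    (hfin : (P.extremePoints ℝ).Finite) (hhull : P = convexHull ℝ (P.extremePoints ℝ))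
    (hfull : affineSpan ℝ P = ⊤)
    {F : Set E} (hF : IsExposed ℝ P F) (hne : F.Nonempty) (hproper : F ≠ P) :
    ∃ G ∈ ambientFacets P, F ⊆ G := by
  suffices h : ∀ k : ℕ, ∀ F : Set E, IsExposed ℝ P F → F.Nonempty → F ≠ P →
      finrank ℝ E - 1 - polyDim F ≤ k → ∃ G ∈ ambientFacets P, F ⊆ G by
    exact h _ F hF hne hproper le_rfl
  intro k
  induction k with
  | zero =>
    intro F hF hne hproper hk
    have hle := polyDim_le_sub_one hfull hF hne hproper
    have heq : polyDim F = finrank ℝ E - 1 := by omega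
    exact ⟨F, ⟨⟨hF, hne, hproper⟩, heq⟩, subset_rfl⟩
  | succ k ih =>
    intro F hF hne hproper hk
    have hle := polyDim_le_sub_one hfull hF hne hproper
    by_cases heq : polyDim F = finrank ℝ E - 1
    · exact ⟨F, ⟨⟨hF, hne, hproper⟩, heq⟩, subset_rfl⟩
    · have hdim : polyDim F + 1 < finrank ℝ E := by omega
      obtain ⟨F', h1, h2, h3, h4, h5⟩ := enlarge hPc hconv hfin hhull hfull hF hne hproper hdim
      have hle' := polyDim_le_sub_one hfull h1 h2 h3
      obtain ⟨G, hG, hFG⟩ := ih F' h1 h2 h3 (by omega)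
      exact ⟨G, hG, h4.trans hFG⟩

theorem violates_facet (hPc : IsCompact P) (hconv : Convex ℝ P)
    (hfin : (P.extremePoints ℝ).Finite) (hhull : P = convexHull ℝ (P.extremePoints ℝ))
    (hfull : affineSpan ℝ P = ⊤)
    {x : E} (hx : x ∉ P) :
    ∃ G ∈ ambientFacets P, ∀ l : E →L[ℝ] ℝ, G = {p ∈ P | ∀ y ∈ P, l y ≤ l p} →
      ∃ b ∈ G, l b < l x := by
  have hPclosed : IsClosed P := hPc.isClosed
  obtain ⟨y, hy⟩ : (interior P).Nonempty :=
    (hconv.interior_nonempty_iff_affineSpan_eq_top).2 hfull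
  have hyP : y ∈ P := interior_subset hy
  have hxy : x ≠ y := fun h => hx (h ▸ hyP)
  set γ : ℝ → E := fun s => y + s • (x - y) with hγ
  have hγcont : Continuous γ := by fun_prop
  set S : Set ℝ := {s : ℝ | 0 ≤ s ∧ s ≤ 1 ∧ γ s ∈ P} with hS
  have h0S : (0:ℝ) ∈ S := ⟨le_refl 0, zero_le_one, by simp [hγ, hyP]⟩
  have hbdd : BddAbove S := ⟨1, fun s hs => hs.2.1⟩
  have hSclosed : IsClosed S := by
    have hseq : S = (Set.Icc (0:ℝ) 1) ∩ γ ⁻¹' P := by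
      ext s; simp [hS, Set.mem_Icc, and_assoc]
    rw [hseq]
    exact isClosed_Icc.inter (hPclosed.preimage hγcont)
  set s₀ : ℝ := sSup S with hs₀
  have hs₀S : s₀ ∈ S := hSclosed.csSup_mem ⟨0, h0S⟩ hbdd
  set b : E := γ s₀ with hb
  have hbP : b ∈ P := hs₀S.2.2
  have hs₀0 : 0 ≤ s₀ := hs₀S.1
  have hs₀1 : s₀ < 1 := by
    rcases lt_or_eq_of_le hs₀S.2.1 with h | h
    · exact h
    · exfalso
      apply hx
      have h1 : γ 1 = x := by simp [hγ]
      rw [← h1, ← h]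
      exact hbP
  have hbni : b ∉ interior P := by
    intro hbint
    obtain ⟨δ, hδ0, hδ⟩ := Metric.isOpen_iff.1 isOpen_interior b hbint
    have hxyn : 0 < ‖x - y‖ := by
      rw [norm_pos_iff, sub_ne_zero]; exact hxy
    set ε : ℝ := min (δ / (2 * ‖x - y‖)) ((1 - s₀)/2) with hε
    have hε0 : 0 < ε := lt_min (div_pos hδ0 (by positivity)) (by linarith)
    have hmem : γ (s₀ + ε) ∈ interior P := by
      apply hδ
      rw [Metric.mem_ball, dist_eq_norm]
      have hdiff : γ (s₀ + ε) - b = ε • (x - y) := by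
        rw [hb, hγ]
        simp only [add_smul]
        abel
      rw [hdiff, norm_smul, Real.norm_eq_abs, abs_of_pos hε0]
      have h2 : ε ≤ δ/(2*‖x - y‖) := min_le_left _ _
      calc ε * ‖x - y‖ ≤ (δ/(2*‖x - y‖)) * ‖x - y‖ :=
            mul_le_mul_of_nonneg_right h2 (norm_nonneg _)
        _ = δ/2 := by field_simp
        _ < δ := by linarith
    have hεle : ε ≤ (1 - s₀)/2 := min_le_right _ _
    have hmemS : s₀ + ε ∈ S := ⟨by linarith, by linarith, interior_subset hmem⟩
    have h3 : s₀ + ε ≤ s₀ := le_csSup hbdd hmemS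
    linarith
  obtain ⟨f, hf⟩ := geometric_hahn_banach_open_point (hconv.interior) isOpen_interior hbni
  have hfP : ∀ p ∈ P, f p ≤ f b := by
    intro p hp
    by_contra hgt
    push_neg at hgt
    have hfy : f y < f b := hf y hy
    have hpos : 0 < f p - f y := by linarith
    set τ : ℝ := (f p - f b) / (2 * (f p - f y)) with hτ
    have hτ0 : 0 < τ := div_pos (by linarith) (by linarith)
    have hτlt : τ < 1 := by
      rw [hτ, div_lt_one (by linarith)]; linarith
    have hmem3 : τ • y + (1 - τ) • p ∈ interior P :=
      hconv.combo_interior_closure_mem_interior hy (subset_closure hp) hτ0 (by linarith)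
        (by ring)
    have h5 := hf _ hmem3
    rw [map_add, map_smul, map_smul] at h5
    simp only [smul_eq_mul] at h5
    have hval : τ * (f p - f y) = (f p - f b)/2 := by
      rw [hτ]; field_simp
    nlinarith [h5, hval]
  have hfyb : f y < f b := hf y hy
  set Fb : Set E := {p ∈ P | ∀ q ∈ P, f q ≤ f p} with hFb
  have hFbexp : IsExposed ℝ P Fb := fun _ => ⟨f, hFb⟩
  have hbFb : b ∈ Fb := ⟨hbP, fun q hq => hfP q hq⟩
  have hFbproper : Fb ≠ P := by
    intro hEq
    have hyFb : y ∈ Fb := hEq ▸ hyP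
    exact absurd (hyFb.2 b hbP) (not_le.2 hfyb)
  obtain ⟨G, hG, hFbG⟩ := subset_facet hPc hconv hfin hhull hfull hFbexp ⟨b, hbFb⟩ hFbproper
  refine ⟨G, hG, ?_⟩
  intro l hlG
  have hbG : b ∈ G := hFbG hbFb
  have hlmax : ∀ p ∈ P, l p ≤ l b := by
    have h6 : b ∈ {p ∈ P | ∀ y ∈ P, l y ≤ l p} := hlG ▸ hbG
    exact h6.2
  have hly : l y < l b := by
    rcases lt_or_eq_of_le (hlmax y hyP) with h | h
    · exact h
    · exfalso
      obtain ⟨δ, hδ0, hδ⟩ := Metric.isOpen_iff.1 isOpen_interior y hy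
      have hl0 : ∀ u : E, l u ≤ 0 := by
        intro u
        by_cases hu : u = 0
        · simp [hu]
        · have hnu : 0 < ‖u‖ := norm_pos_iff.2 hu
          set c : ℝ := δ / (2*‖u‖) with hc
          have hc0 : 0 < c := by positivity
          have hp'mem : y + c • u ∈ P := by
            apply interior_subset
            apply hδ
            rw [Metric.mem_ball, dist_eq_norm]
            have h7 : y + c • u - y = c • u := by abel
            rw [h7, norm_smul, Real.norm_eq_abs, abs_of_pos hc0, hc]
            rw [div_mul_eq_mul_div, mul_comm δ ‖u‖, mul_comm 2 ‖u‖, mul_div_mul_left _ _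
              (ne_of_gt hnu)]
            linarith
          have h8 := hlmax _ hp'mem
          rw [map_add, map_smul] at h8
          simp only [smul_eq_mul] at h8
          rw [← h] at h8
          nlinarith
      have hl00 : l = 0 := by
        ext u
        have h1 := hl0 u
        have h2 := hl0 (-u)
        simp only [map_neg] at h2
        simp only [ContinuousLinearMap.zero_apply]
        linarith
      apply hG.1.2.2
      rw [hlG, hl00]
      ext p
      simp
  have hbeq : l b = l y + s₀ * (l x - l y) := by
    rw [hb, hγ, map_add, map_smul]
    simp only [smul_eq_mul, map_sub]
  have hprod : 0 < s₀ * (l x - l y) := by linarith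
  have hlxy : l y < l x := by nlinarith
  refine ⟨b, hbG, ?_⟩
  nlinarith

theorem normals_indep (hPc : IsCompact P) (hconv : Convex ℝ P)
    (hfin : (P.extremePoints ℝ).Finite) (hhull : P = convexHull ℝ (P.extremePoints ℝ))
    (hfull : affineSpan ℝ P = ⊤) (hfacfin : (ambientFacets P).Finite)
    {w : E} (hw : w ∈ P.extremePoints ℝ) {z : E} (hz : z ≠ 0)
    (hzmem : ∀ G ∈ ambientFacets P, w ∈ G → z ∈ vectorSpan ℝ G) : False := by
  classical
  have hwP : w ∈ P := hw.1
  have hch : ∀ G ∈ ambientFacets P, ∃ l : E →L[ℝ] ℝ,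
      G = {x ∈ P | ∀ y ∈ P, l y ≤ l x} ∧ l ≠ 0 ∧ ∀ v ∈ vectorSpan ℝ G, l v = 0 :=
    fun G hG => exposer hfull hG.1.1 hG.1.2.1 hG.1.2.2
  choose! ℓ hℓdef hℓ0 hℓker using hch
  have hpt : ∀ G ∈ ambientFacets P, ∃ p, p ∈ G := fun G hG => hG.1.2.1
  choose! p hp using hpt
  set c : Set E → ℝ := fun G => ℓ G (p G) with hc
  have hmax : ∀ G ∈ ambientFacets P, ∀ x ∈ P, ℓ G x ≤ c G := by
    intro G hG x hx
    have h1 : p G ∈ {x ∈ P | ∀ y ∈ P, ℓ G y ≤ ℓ G x} := hℓdef G hG ▸ hp G hG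
    exact h1.2 x hx
  have hval : ∀ G ∈ ambientFacets P, ∀ x ∈ G, ℓ G x = c G := by
    intro G hG x hx
    have h1 : x ∈ {x ∈ P | ∀ y ∈ P, ℓ G y ≤ ℓ G x} := hℓdef G hG ▸ hx
    have h2 : p G ∈ P := (hG.1.1.subset) (hp G hG)
    exact le_antisymm (hmax G hG x h1.1) (h1.2 (p G) h2)
  set Φ' : Finset (Set E) := (hfacfin.toFinset).filter (fun G => w ∉ G) with hΦ'
  have hgap : ∀ G ∈ Φ', 0 < c G - ℓ G w := by
    intro G hG
    rw [hΦ', Finset.mem_filter, hfacfin.mem_toFinset] at hG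
    rcases lt_or_eq_of_le (hmax G hG.1 w hwP) with h | h
    · linarith
    · exfalso
      apply hG.2
      rw [hℓdef G hG.1]
      exact ⟨hwP, fun y hy => (hmax G hG.1 y hy).trans h.ge⟩
  obtain ⟨ε, hε0, hεb⟩ : ∃ ε : ℝ, 0 < ε ∧ ∀ G ∈ Φ', ε * |ℓ G z| < c G - ℓ G w := by
    rcases Φ'.eq_empty_or_nonempty with he | hne
    · exact ⟨1, one_pos, fun G hG => absurd hG (by simp [he])⟩
    · set e : Set E → ℝ := fun G => (c G - ℓ G w)/(|ℓ G z| + 1) with he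
      have he0 : ∀ G ∈ Φ', 0 < e G := by
        intro G hG
        exact div_pos (hgap G hG) (by positivity)
      refine ⟨min 1 (Φ'.inf' hne e), lt_min one_pos ?_, ?_⟩
      · rw [Finset.lt_inf'_iff]
        exact fun G hG => he0 G hG
      · intro G hG
        have h1 : min 1 (Φ'.inf' hne e) ≤ e G := (min_le_right _ _).trans (Finset.inf'_le e hG)
        have h2 : e G * (|ℓ G z| + 1) = c G - ℓ G w := by
          rw [he]
          field_simp
        have h3 : 0 < e G := he0 G hG
        have h4 : min 1 (Φ'.inf' hne e) * |ℓ G z| ≤ e G * |ℓ G z| :=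
          mul_le_mul_of_nonneg_right h1 (abs_nonneg _)
        nlinarith
  have hinP : ∀ s : ℝ, |s| ≤ ε → w + s • z ∈ P := by
    intro s hs
    by_contra hnot
    obtain ⟨G, hG, hGprop⟩ := violates_facet hPc hconv hfin hhull hfull hnot
    obtain ⟨b, hbG, hblt⟩ := hGprop (ℓ G) (hℓdef G hG)
    have hbval : ℓ G b = c G := hval G hG b hbG
    rw [map_add, map_smul] at hblt
    simp only [smul_eq_mul] at hblt
    by_cases hwG : w ∈ G
    · have hz0 : ℓ G z = 0 := hℓker G hG z (hzmem G hG hwG)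
      have hwval : ℓ G w = c G := hval G hG w hwG
      rw [hz0, hwval] at hblt
      linarith
    · have hG' : G ∈ Φ' := by
        rw [hΦ', Finset.mem_filter, hfacfin.mem_toFinset]
        exact ⟨hG, hwG⟩
      have h2 := hεb G hG'
      have h3 : s * ℓ G z ≤ |s| * |ℓ G z| := by
        calc s * ℓ G z ≤ |s * ℓ G z| := le_abs_self _
          _ = |s| * |ℓ G z| := abs_mul s _
      have h4 : |s| * |ℓ G z| ≤ ε * |ℓ G z| := mul_le_mul_of_nonneg_right hs (abs_nonneg _)
      linarith
  have h1 : w + ε • z ∈ P := hinP ε (by rw [abs_of_pos hε0])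
  have h2 : w + (-ε) • z ∈ P := hinP (-ε) (by rw [abs_neg, abs_of_pos hε0])
  have hseg : w ∈ openSegment ℝ (w + ε • z) (w + (-ε) • z) := by
    refine ⟨1/2, 1/2, by norm_num, by norm_num, by norm_num, ?_⟩
    module
  have h5 := hw.2 h1 h2 hseg
  have h6 : ε • z = 0 := by
    have h7 := h5
    have h8 := congrArg (fun q => q - w) h7
    simpa using h8
  rw [smul_eq_zero] at h6
  rcases h6 with h6 | h6
  · exact absurd h6 (ne_of_gt hε0)
  · exact hz h6

theorem drop_rank (U K : Submodule ℝ E) (hK : finrank ℝ E ≤ finrank ℝ K + 1) :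
    finrank ℝ U ≤ finrank ℝ (K ⊓ U : Submodule ℝ E) + 1 := by
  have h := Submodule.finrank_sup_add_finrank_inf_eq K U
  have h2 : finrank ℝ (K ⊔ U : Submodule ℝ E) ≤ finrank ℝ E := Submodule.finrank_le _
  omega

theorem inf_chain (Φ : Finset (Set E))
    (hΦ : ∀ G ∈ Φ, finrank ℝ E ≤ finrank ℝ (vectorSpan ℝ G) + 1) :
    ∀ A ⊆ Φ, finrank ℝ (A.inf (fun G => vectorSpan ℝ G) : Submodule ℝ E)
      ≤ finrank ℝ (Φ.inf (fun G => vectorSpan ℝ G) : Submodule ℝ E) + (Φ.card - A.card) := by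
  classical
  suffices h : ∀ m : ℕ, ∀ A ⊆ Φ, Φ.card - A.card ≤ m →
      finrank ℝ (A.inf (fun G => vectorSpan ℝ G) : Submodule ℝ E)
      ≤ finrank ℝ (Φ.inf (fun G => vectorSpan ℝ G) : Submodule ℝ E) + (Φ.card - A.card) by
    exact fun A hA => h _ A hA le_rfl
  intro m
  induction m with
  | zero =>
    intro A hA hm
    have : A = Φ := Finset.eq_of_subset_of_card_le hA (by omega)
    subst this
    exact Nat.le_add_right _ _
  | succ m ih =>
    intro A hA hm
    by_cases hAeq : A = Φ
    · subst hAeq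
      exact Nat.le_add_right _ _
    · obtain ⟨g, hgΦ, hgA⟩ := Finset.exists_of_ssubset (lt_of_le_of_ne hA hAeq)
      have hcardA : A.card < Φ.card := Finset.card_lt_card (lt_of_le_of_ne hA hAeq)
      have hins : insert g A ⊆ Φ := Finset.insert_subset hgΦ hA
      have hinscard : (insert g A).card = A.card + 1 := Finset.card_insert_of_notMem hgA
      have hstep : finrank ℝ (A.inf (fun G => vectorSpan ℝ G) : Submodule ℝ E)
          ≤ finrank ℝ ((insert g A).inf (fun G => vectorSpan ℝ G) : Submodule ℝ E) + 1 := by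
        rw [Finset.inf_insert]
        exact drop_rank _ _ (hΦ g hgΦ)
      have hrec := ih (insert g A) hins (by omega)
      rw [hinscard] at hrec
      omega

theorem card_rank {T : Finset E} (hT : T.Nonempty) :
    finrank ℝ (vectorSpan ℝ (T : Set E)) + 1 ≤ T.card := by
  classical
  induction hT using Finset.Nonempty.cons_induction with
  | singleton a =>
    rw [Finset.coe_singleton, vectorSpan_singleton]
    simp
  | cons a s ha hs ih =>
    have h1 : ((Finset.cons a s ha : Finset E) : Set E) = insert a (s : Set E) := by simp
    rw [h1]
    have h2 := finrank_vectorSpan_insert_le_set ℝ (s : Set E) a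
    rw [Finset.card_cons]
    omega

theorem card_rank_set {T : Set E} (hfinT : T.Finite) (hne : T.Nonempty) :
    finrank ℝ (vectorSpan ℝ T) + 1 ≤ T.ncard := by
  have h := card_rank (T := hfinT.toFinset) (by simpa using hne)
  rw [hfinT.coe_toFinset] at h
  rwa [Set.ncard_eq_toFinset_card T hfinT]

theorem rank_union_le (s : Set E) {t : Set E} (ht : t.Finite) :
    finrank ℝ (vectorSpan ℝ (s ∪ t)) ≤ finrank ℝ (vectorSpan ℝ s) + t.ncard := by
  refine Set.Finite.induction_on _ ht (by rw [Set.union_empty, Set.ncard_empty]; omega) ?_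
  intro a u ha hu ih
  · have h1 : s ∪ insert a u = insert a (s ∪ u) := by
      rw [Set.union_insert]
    rw [h1, Set.ncard_insert_of_notMem ha hu]
    have h2 := finrank_vectorSpan_insert_le_set ℝ (s ∪ u) a
    omega

theorem facets_finite_s4 (hPc : IsCompact P) (hconv : Convex ℝ P)
    (hfin : (P.extremePoints ℝ).Finite) : (ambientFacets P).Finite := by
  have hinj : Set.InjOn (fun G => P.extremePoints ℝ ∩ G) (ambientFacets P) := by
    intro G₁ h₁ G₂ h₂ heq
    have heq' : P.extremePoints ℝ ∩ G₁ = P.extremePoints ℝ ∩ G₂ := heq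
    calc G₁ = convexHull ℝ (P.extremePoints ℝ ∩ G₁) := face_hull hPc hconv hfin h₁.1.1
      _ = convexHull ℝ (P.extremePoints ℝ ∩ G₂) := by rw [heq']
      _ = G₂ := (face_hull hPc hconv hfin h₂.1.1).symm
  have hfing : ((fun G => P.extremePoints ℝ ∩ G) '' (ambientFacets P)).Finite := by
    apply (hfin.finite_subsets).subset
    rintro _ ⟨G, hG, rfl⟩
    exact Set.inter_subset_left
  exact Set.Finite.of_finite_image hfing hinj

theorem facet_card (hPc : IsCompact P) (hconv : Convex ℝ P)
    (hfin : (P.extremePoints ℝ).Finite) (hfull : affineSpan ℝ P = ⊤)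
    {G : Set E} (hG : G ∈ ambientFacets P) (hn : 0 < finrank ℝ E) :
    finrank ℝ E ≤ (P.extremePoints ℝ ∩ G).ncard := by
  have hGh : G = convexHull ℝ (P.extremePoints ℝ ∩ G) := face_hull hPc hconv hfin hG.1.1
  have hne : (P.extremePoints ℝ ∩ G).Nonempty := by
    rcases hG.1.2.1 with ⟨g, hg⟩
    by_contra h
    rw [Set.not_nonempty_iff_eq_empty] at h
    rw [h, convexHull_empty] at hGh
    exact absurd (hGh ▸ hg) (Set.notMem_empty g)
  have hfinT : (P.extremePoints ℝ ∩ G).Finite := hfin.subset Set.inter_subset_left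
  have hspan : vectorSpan ℝ (P.extremePoints ℝ ∩ G) = vectorSpan ℝ G := by
    rw [← direction_affineSpan, ← direction_affineSpan]
    congr 1
    conv_rhs => rw [hGh]
    rw [affineSpan_convexHull]
  have hrank : finrank ℝ (vectorSpan ℝ G) = finrank ℝ E - 1 := by
    have h1 := hG.2
    rw [polyDim, direction_affineSpan] at h1
    exact h1
  have hcard := card_rank_set hfinT hne
  rw [hspan, hrank] at hcard
  omega

end VFAAux


open Module Set VFAAux

/-- Every simple full-dimensional polytope (every vertex is contained in
exactly `d` facets of `P`) has a vertex-facet assignment. -/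

theorem vfa_of_simple {d : ℕ} (P : Set (Fin d → ℝ))
    (hP : IsPolytope P) (hfull : affineSpan ℝ P = ⊤)
    (hsimple : ∀ v ∈ P.extremePoints ℝ, {F ∈ ambientFacets P | v ∈ F}.ncard = d) :
    HasVFA P := by
  classical
  by_cases hd0 : d = 0
  · subst hd0
    have hfempty : ∀ G, G ∉ ambientFacets P := by
      intro G hG
      apply hG.1.2.2
      obtain ⟨g, hg⟩ := hG.1.2.1
      apply Set.Subset.antisymm hG.1.1.subset
      intro p hp
      have hpg : p = g := funext fun i => i.elim0
      rw [hpg]; exact hg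
    exact Or.inr ⟨fun G => absurd G.2 (hfempty G.1), fun a b h => absurd a.2 (hfempty a.1),
      fun G => absurd G.2 (hfempty G.1)⟩
  · have hd : 0 < d := Nat.pos_of_ne_zero hd0
    have hn : finrank ℝ (Fin d → ℝ) = d := Module.finrank_fin_fun ℝ
    have hPc := poly_compact hP
    have hconv := poly_convex hP
    have hfin := poly_ext_finite hP
    have hhull := poly_hull_ext hP
    have hfacfin := facets_finite_s4 hPc hconv hfin
    set V : Set (Fin d → ℝ) := P.extremePoints ℝ with hV
    set Vfin : Finset (Fin d → ℝ) := hfin.toFinset with hVfin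
    set t : (ambientFacets P) → Finset (Fin d → ℝ) :=
      fun G => Vfin.filter (fun v => v ∉ (G : Set (Fin d → ℝ))) with htdef
    have hall : ∀ A : Finset (ambientFacets P), A.card ≤ (A.biUnion t).card := by
      intro A
      rcases A.eq_empty_or_nonempty with rfl | hAne
      · simp
      set W : Set (Fin d → ℝ) := {v ∈ V | ∀ G ∈ A, v ∈ (G : Set (Fin d → ℝ))} with hW
      have hWfin : W.Finite := hfin.subset (fun v hv => hv.1)
      have hWV : W ⊆ V := fun v hv => hv.1
      have hbiUnion : ∀ v, v ∈ A.biUnion t ↔ v ∈ V ∧ v ∉ W := by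
        intro v
        simp only [Finset.mem_biUnion, htdef, Finset.mem_filter, hVfin, hfin.mem_toFinset]
        constructor
        · rintro ⟨G, hGA, hvV, hvG⟩
          exact ⟨hvV, fun hvW => hvG (hvW.2 G hGA)⟩
        · rintro ⟨hvV, hvW⟩
          rw [hW] at hvW
          simp only [Set.mem_setOf_eq, not_and, not_forall] at hvW
          obtain ⟨G, hGA, hvG⟩ := hvW hvV
          exact ⟨G, hGA, hvV, hvG⟩
      have hcardBU : (A.biUnion t).card = (V \ W).ncard := by
        have hco : ((A.biUnion t) : Set (Fin d → ℝ)) = V \ W := by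
          ext v
          simp only [Finset.coe_sort_coe, Finset.mem_coe, Set.mem_diff]
          exact hbiUnion v
        rw [← Set.ncard_coe_finset, hco]
      rw [hcardBU]
      have hVncard : V.ncard = Vfin.card := by
        rw [← Set.ncard_coe_finset, hfin.coe_toFinset]
      rcases W.eq_empty_or_nonempty with hWe | ⟨w, hwW⟩
      · -- counting: A.card ≤ Vfin.card
        have hcount1 : ∀ G : (ambientFacets P), d ≤ (Vfin.filter (fun v => v ∈ (G : Set (Fin d → ℝ)))).card := by
          intro G
          have h1 := facet_card hPc hconv hfin hfull G.2 (by omega)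
          rw [hn] at h1
          have h2 : ((Vfin.filter (fun v => v ∈ (G : Set (Fin d → ℝ)))) : Set (Fin d → ℝ))
              = V ∩ (G : Set (Fin d → ℝ)) := by
            ext v
            simp [hVfin, hfin.mem_toFinset]
          calc d ≤ (V ∩ (G : Set (Fin d → ℝ))).ncard := h1
            _ = _ := by rw [← h2, Set.ncard_coe_finset]
        have hcount2 : ∀ v ∈ Vfin, (A.filter (fun (G : (ambientFacets P)) => v ∈ (G : Set (Fin d → ℝ)))).card ≤ d := by
          intro v hv
          have hvV : v ∈ V := hfin.mem_toFinset.1 hv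
          have hscard := hsimple v hvV
          set Afl : Finset (ambientFacets P) :=
            A.filter (fun (G : (ambientFacets P)) => v ∈ (G : Set (Fin d → ℝ))) with hAfl
          have hsub : (Subtype.val '' ((Afl : Finset (ambientFacets P)) : Set (ambientFacets P)))
              ⊆ {F ∈ ambientFacets P | v ∈ F} := by
            rintro _ ⟨G, hG, rfl⟩
            rw [Finset.mem_coe, hAfl, Finset.mem_filter] at hG
            exact ⟨G.2, hG.2⟩
          have hfins : {F ∈ ambientFacets P | v ∈ F}.Finite := hfacfin.subset (fun F hF => hF.1)
          have h3 := Set.ncard_le_ncard hsub hfins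
          rw [hscard] at h3
          calc Afl.card
              = (Subtype.val '' ((Afl : Finset (ambientFacets P)) : Set (ambientFacets P))).ncard := by
                rw [Set.ncard_image_of_injective _ Subtype.val_injective, Set.ncard_coe_finset]
            _ ≤ d := h3
        have hsum : d * A.card ≤ d * Vfin.card := by
          calc d * A.card = ∑ _G ∈ A, d := by rw [Finset.sum_const, smul_eq_mul, mul_comm]
            _ ≤ ∑ G ∈ A, (Vfin.filter (fun v => v ∈ (G : Set (Fin d → ℝ)))).card :=
                Finset.sum_le_sum (fun G _ => hcount1 G)
            _ = ∑ G ∈ A, ∑ v ∈ Vfin, (if v ∈ (G : Set (Fin d → ℝ)) then 1 else 0) := by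
                refine Finset.sum_congr rfl (fun G _ => ?_)
                rw [Finset.card_filter]
            _ = ∑ v ∈ Vfin, ∑ G ∈ A, (if v ∈ (G : Set (Fin d → ℝ)) then 1 else 0) :=
                Finset.sum_comm
            _ = ∑ v ∈ Vfin, (A.filter (fun (G : (ambientFacets P)) => v ∈ (G : Set (Fin d → ℝ)))).card := by
                refine Finset.sum_congr rfl (fun v _ => ?_)
                rw [Finset.card_filter]
            _ ≤ ∑ _v ∈ Vfin, d := Finset.sum_le_sum hcount2
            _ = d * Vfin.card := by rw [Finset.sum_const, smul_eq_mul, mul_comm]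
        have hAV : A.card ≤ Vfin.card := Nat.le_of_mul_le_mul_left hsum hd
        rw [hWe, Set.diff_empty]
        omega
      · obtain ⟨hwV, hwA⟩ := hwW
        set Φ : Finset (Set (Fin d → ℝ)) := (hfacfin.toFinset).filter (fun G => w ∈ G) with hΦ
        have hΦcard : Φ.card = d := by
          have h1 : (Φ : Set (Set (Fin d → ℝ))) = {F ∈ ambientFacets P | w ∈ F} := by
            ext G
            simp [hΦ, hfacfin.mem_toFinset]
          rw [← Set.ncard_coe_finset, h1]
          exact hsimple w hwV
        set A' : Finset (Set (Fin d → ℝ)) := A.image Subtype.val with hA'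
        have hA'card : A'.card = A.card := Finset.card_image_of_injective _ Subtype.val_injective
        have hA'Φ : A' ⊆ Φ := by
          intro G hG
          rw [hA', Finset.mem_image] at hG
          obtain ⟨G', hG'A, rfl⟩ := hG
          rw [hΦ, Finset.mem_filter, hfacfin.mem_toFinset]
          exact ⟨G'.2, hwA G' hG'A⟩
        have hinfbot : (Φ.inf (fun G => vectorSpan ℝ G) : Submodule ℝ (Fin d → ℝ)) = ⊥ := by
          rw [Submodule.eq_bot_iff]
          intro z hzmem
          by_contra hz
          refine normals_indep hPc hconv hfin hhull hfull hfacfin hwV hz ?_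
          intro G hG hwG
          refine Submodule.mem_finsetInf.1 hzmem G ?_
          rw [hΦ, Finset.mem_filter, hfacfin.mem_toFinset]
          exact ⟨hG, hwG⟩
        have hΦrank : ∀ G ∈ Φ, finrank ℝ (Fin d → ℝ) ≤ finrank ℝ (vectorSpan ℝ G) + 1 := by
          intro G hGΦ
          rw [hΦ, Finset.mem_filter, hfacfin.mem_toFinset] at hGΦ
          have h1 := hGΦ.1.2
          rw [polyDim, direction_affineSpan] at h1
          rw [h1, hn]
          omega
        have hchain := inf_chain Φ hΦrank A' hA'Φ
        rw [hinfbot, finrank_bot, hΦcard, hA'card] at hchain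
        have hWspan : vectorSpan ℝ W ≤ (A'.inf (fun G => vectorSpan ℝ G) : Submodule ℝ (Fin d → ℝ)) := by
          rw [vectorSpan_def, Submodule.span_le]
          rintro u ⟨a, ha, b, hb, rfl⟩
          rw [SetLike.mem_coe, Submodule.mem_finsetInf]
          intro G hGA'
          rw [hA', Finset.mem_image] at hGA'
          obtain ⟨G', hG'A, rfl⟩ := hGA'
          exact vsub_mem_vectorSpan ℝ (ha.2 G' hG'A) (hb.2 G' hG'A)
        have hWrank : finrank ℝ (vectorSpan ℝ W) ≤ d - A.card :=
          le_trans (Submodule.finrank_mono hWspan) (by omega)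
        have hAd : A.card ≤ d := by
          have h9 := Finset.card_le_card hA'Φ
          omega
        have hVrank : finrank ℝ (vectorSpan ℝ V) = d := by
          have h5 : affineSpan ℝ V = ⊤ := by
            rw [hV, ← affineSpan_convexHull, ← hhull, hfull]
          rw [← direction_affineSpan, h5, AffineSubspace.direction_top, finrank_top, hn]
        have hsplit : W ∪ (V \ W) = V := Set.union_diff_cancel hWV
        have hbound := rank_union_le W (t := V \ W) (hfin.subset Set.diff_subset)
        rw [hsplit, hVrank] at hbound
        omega
    obtain ⟨f, hfinj, hfmem⟩ := (Finset.all_card_le_biUnion_card_iff_exists_injective t).1 hall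
    refine Or.inr ⟨fun G => ⟨f G, ?_⟩, ?_, ?_⟩
    · have h1 := hfmem G
      rw [htdef] at h1
      simp only [Finset.mem_filter, hVfin, hfin.mem_toFinset] at h1
      exact h1.1
    · intro a b hab
      apply hfinj
      simpa using congrArg Subtype.val hab
    · intro G
      have h1 := hfmem G
      rw [htdef] at h1
      simp only [Finset.mem_filter, hVfin, hfin.mem_toFinset] at h1
      exact h1.2
end
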